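/- arXiv:0806.1866 — 12 statements merged into one kernel-verified Lean document; each statement's English description precedes it below -/
import Mathlib

section
/- Let 𝒯 : D₂₁ × D₁₂ → H₁ × H₂ be the block operator 𝒯(f,g) = (T₁₁ f + T₁₂ g, T₂₁ f + T₂₂ g) and let S be the Schur-type operator with domain D(S) = {f ∈ D₂₁ : T₂₂⁻¹(T₂₁ f) ∈ D₁₂} and S f = T₁₁ f − T₁₂(T₂₂⁻¹(T₂₁ f)). Then 𝒯 is injective if and only if S is injective, and moreover ker 𝒯 = {(f, −T₂₂⁻¹(T₂₁ f)) : f ∈ ker S}; in particular ker 𝒯 is linearly isomorphic to ker S. -/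
/-- For the block operator `𝒯(f,g) = (T₁₁f + T₁₂g, T₂₁f + T₂₂g)` and the
Schur-type operator `S f = T₁₁ f − T₁₂(T₂₂⁻¹(T₂₁ f))` with domain
`D(S) = {f ∈ D₂₁ : T₂₂⁻¹(T₂₁ f) ∈ D₁₂}`, the operator `𝒯` is injective iff `S` is injective,
`ker 𝒯 = {(f, −T₂₂⁻¹(T₂₁ f)) : f ∈ ker S}`, and `ker 𝒯` is linearly isomorphic to `ker S`. -/
theorem stmt_0 {H₁ H₂ : Type*}
    [NormedAddCommGroup H₁] [InnerProductSpace ℂ H₁] [CompleteSpace H₁]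
    [NormedAddCommGroup H₂] [InnerProductSpace ℂ H₂] [CompleteSpace H₂]
    (D21 : Submodule ℂ H₁) (D12 D22 : Submodule ℂ H₂) (h1222 : D12 ≤ D22)
    (T11 : D21 →ₗ[ℂ] H₁) (T12 : D12 →ₗ[ℂ] H₁) (T21 : D21 →ₗ[ℂ] H₂)
    (T22 : D22 →ₗ[ℂ] H₂) (T22inv : H₂ →ₗ[ℂ] D22)
    (hright : ∀ y : H₂, T22 (T22inv y) = y)
    (hleft : ∀ x : D22, T22inv (T22 x) = x)
    (𝒯 : (D21 × D12) →ₗ[ℂ] H₁ × H₂)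
    (h𝒯 : ∀ p : D21 × D12,
      𝒯 p = (T11 p.1 + T12 p.2, T21 p.1 + T22 (Submodule.inclusion h1222 p.2)))
    (DS : Submodule ℂ D21)
    (hDS : ∀ f : D21, f ∈ DS ↔ (T22inv (T21 f) : H₂) ∈ D12)
    (S : DS →ₗ[ℂ] H₁)
    (hS : ∀ f : DS, S f = T11 f.1 - T12 ⟨(T22inv (T21 f.1) : H₂), (hDS f.1).mp f.2⟩) :
    (Function.Injective 𝒯 ↔ Function.Injective S) ∧
    (∀ p : D21 × D12, 𝒯 p = 0 ↔
      ∃ f : DS, S f = 0 ∧ p.1 = f.1 ∧ (p.2 : H₂) = -(T22inv (T21 f.1) : H₂)) ∧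
    Nonempty (LinearMap.ker 𝒯 ≃ₗ[ℂ] LinearMap.ker S) := by
  have key : ∀ p : D21 × D12, 𝒯 p = 0 ↔
      ∃ hf : p.1 ∈ DS, S ⟨p.1, hf⟩ = 0 ∧ (p.2 : H₂) = -(T22inv (T21 p.1) : H₂) := by
    intro p
    rw [h𝒯, Prod.mk_eq_zero]
    constructor
    · rintro ⟨h1, h2⟩
      have h2' : T22inv (T21 p.1) + Submodule.inclusion h1222 p.2 = 0 := by
        have := congrArg T22inv h2
        simpa [map_add, hleft] using this
      have hcoe : (T22inv (T21 p.1) : H₂) = -(p.2 : H₂) := by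
        have := congrArg Subtype.val h2'
        exact eq_neg_of_add_eq_zero_left this
      have hf : p.1 ∈ DS := (hDS p.1).mpr (hcoe ▸ neg_mem p.2.2)
      refine ⟨hf, ?_, ?_⟩
      · rw [hS]
        have he : (⟨(T22inv (T21 p.1) : H₂), (hDS p.1).mp hf⟩ : D12) = -p.2 :=
          Subtype.ext hcoe
        rw [he, map_neg, sub_neg_eq_add, h1]
      · rw [hcoe, neg_neg]
    · rintro ⟨hf, hS0, hp2⟩
      have hcoe : (T22inv (T21 p.1) : H₂) = -(p.2 : H₂) := by rw [hp2, neg_neg]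
      have he : (⟨(T22inv (T21 p.1) : H₂), (hDS p.1).mp hf⟩ : D12) = -p.2 :=
        Subtype.ext hcoe
      constructor
      · have := hS ⟨p.1, hf⟩
        rw [he, map_neg, sub_neg_eq_add] at this
        simpa [this] using hS0
      · have : (Submodule.inclusion h1222 p.2 : H₂) = (p.2 : H₂) := rfl
        have h22 : T22 (Submodule.inclusion h1222 p.2)
            = T22 (-(T22inv (T21 p.1))) := by
          congr 1
          refine Subtype.ext ?_
          simp [this, hp2]
        rw [h22, map_neg, hright]
        simp
  have mem12 : ∀ f : DS, -(T22inv (T21 (f : D21)) : H₂) ∈ D12 :=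
    fun f => neg_mem ((hDS f.1).mp f.2)
  -- injectivity equivalence
  have hinj : Function.Injective 𝒯 ↔ Function.Injective S := by
    rw [injective_iff_map_eq_zero, injective_iff_map_eq_zero]
    constructor
    · intro h𝒯inj f hSf
      have hp : 𝒯 (f.1, ⟨-(T22inv (T21 (f : D21)) : H₂), mem12 f⟩) = 0 := by
        refine (key _).mpr ⟨f.2, by simpa using hSf, rfl⟩
      have := h𝒯inj _ hp
      have h1 : (f : D21) = 0 := congrArg Prod.fst this
      exact Subtype.ext h1
    · intro hSinj p hp
      obtain ⟨hf, hS0, hp2⟩ := (key p).mp hp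
      have h1 : (⟨p.1, hf⟩ : DS) = 0 := hSinj _ hS0
      have h1' : p.1 = 0 := congrArg Subtype.val h1
      have h2 : p.2 = 0 := by
        refine Subtype.ext ?_
        rw [hp2, h1']
        simp
      exact Prod.ext h1' h2
  refine ⟨hinj, ?_, ?_⟩
  · intro p
    rw [key p]
    constructor
    · rintro ⟨hf, hS0, hp2⟩
      exact ⟨⟨p.1, hf⟩, hS0, rfl, hp2⟩
    · rintro ⟨⟨f1, hf1⟩, hS0, h1, h2⟩
      obtain ⟨p1, p2⟩ := p
      simp only at h1 h2
      subst h1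
      exact ⟨hf1, hS0, h2⟩
  · -- the linear equivalence
    have hgmem : ∀ x : LinearMap.ker 𝒯, (x : D21 × D12).1 ∈ DS :=
      fun x => ((key x.1).mp x.2).1
    have hgker : ∀ x : LinearMap.ker 𝒯,
        (⟨(x : D21 × D12).1, hgmem x⟩ : DS) ∈ LinearMap.ker S :=
      fun x => ((key x.1).mp x.2).2.1
    have hgsnd : ∀ x : LinearMap.ker 𝒯,
        ((x : D21 × D12).2 : H₂) = -(T22inv (T21 (x : D21 × D12).1) : H₂) :=
      fun x => ((key x.1).mp x.2).2.2
    let g : LinearMap.ker 𝒯 →ₗ[ℂ] LinearMap.ker S :=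
      { toFun := fun x => ⟨⟨(x : D21 × D12).1, hgmem x⟩, hgker x⟩
        map_add' := fun x y => Subtype.ext (Subtype.ext rfl)
        map_smul' := fun c x => Subtype.ext (Subtype.ext rfl) }
    have hgbij : Function.Bijective g := by
      constructor
      · intro x y hxy
        have h1 : (x : D21 × D12).1 = (y : D21 × D12).1 :=
          congrArg Subtype.val (congrArg Subtype.val hxy)
        refine Subtype.ext (Prod.ext h1 (Subtype.ext ?_))
        rw [hgsnd x, hgsnd y, h1]
      · intro f
        have hp : 𝒯 ((f : DS).1, ⟨-(T22inv (T21 ((f : DS) : D21)) : H₂), mem12 f⟩) = 0 :=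
          (key _).mpr ⟨(f : DS).2, f.2, rfl⟩
        refine ⟨⟨_, hp⟩, ?_⟩
        exact Subtype.ext (Subtype.ext rfl)
    exact ⟨LinearEquiv.ofBijective g hgbij⟩
end

section
/- Let 𝒯 : D₂₁ × D₁₂ → H₁ × H₂ be the block operator 𝒯(f,g) = (T₁₁ f + T₁₂ g, T₂₁ f + T₂₂ g) and let S be the Schur-type operator with domain D(S) = {f ∈ D₂₁ : T₂₂⁻¹(T₂₁ f) ∈ D₁₂} and S f = T₁₁ f − T₁₂(T₂₂⁻¹(T₂₁ f)). If in addition T₂₁ : D₂₁ → H₂ is surjective, then range(S) × {0} = range(𝒯) ∩ (H₁ × {0}), and 𝒯 is surjective if and only if S is surjective. -/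
/-- For the block operator `𝒯(f,g) = (T₁₁f + T₁₂g, T₂₁f + T₂₂g)` and the
Schur-type operator `S f = T₁₁ f − T₁₂(T₂₂⁻¹(T₂₁ f))`, if `T₂₁` is surjective then
`range(S) × {0} = range(𝒯) ∩ (H₁ × {0})` and `𝒯` is surjective iff `S` is surjective. -/
theorem stmt_1 {H₁ H₂ : Type*}
    [NormedAddCommGroup H₁] [InnerProductSpace ℂ H₁] [CompleteSpace H₁]
    [NormedAddCommGroup H₂] [InnerProductSpace ℂ H₂] [CompleteSpace H₂]
    (D21 : Submodule ℂ H₁) (D12 D22 : Submodule ℂ H₂) (h1222 : D12 ≤ D22)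
    (T11 : D21 →ₗ[ℂ] H₁) (T12 : D12 →ₗ[ℂ] H₁) (T21 : D21 →ₗ[ℂ] H₂)
    (T22 : D22 →ₗ[ℂ] H₂) (T22inv : H₂ →ₗ[ℂ] D22)
    (hright : ∀ y : H₂, T22 (T22inv y) = y)
    (hleft : ∀ x : D22, T22inv (T22 x) = x)
    (𝒯 : (D21 × D12) →ₗ[ℂ] H₁ × H₂)
    (h𝒯 : ∀ p : D21 × D12,
      𝒯 p = (T11 p.1 + T12 p.2, T21 p.1 + T22 (Submodule.inclusion h1222 p.2)))
    (DS : Submodule ℂ D21)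
    (hDS : ∀ f : D21, f ∈ DS ↔ (T22inv (T21 f) : H₂) ∈ D12)
    (S : DS →ₗ[ℂ] H₁)
    (hS : ∀ f : DS, S f = T11 f.1 - T12 ⟨(T22inv (T21 f.1) : H₂), (hDS f.1).mp f.2⟩)
    (hT21surj : Function.Surjective T21) :
    (Set.range S) ×ˢ ({0} : Set H₂) = Set.range 𝒯 ∩ (Set.univ ×ˢ ({0} : Set H₂)) ∧
    (Function.Surjective 𝒯 ↔ Function.Surjective S) := by
  -- forward direction: (S f, 0) is in the range of 𝒯
  have fwd : ∀ f : DS, (S f, (0:H₂)) ∈ Set.range 𝒯 := by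
    intro f
    refine ⟨(f.1, ⟨-(T22inv (T21 f.1) : H₂), neg_mem ((hDS f.1).mp f.2)⟩), ?_⟩
    rw [h𝒯, hS]
    have hneg : (⟨-(T22inv (T21 f.1) : H₂), neg_mem ((hDS f.1).mp f.2)⟩ : D12)
        = -⟨(T22inv (T21 f.1) : H₂), (hDS f.1).mp f.2⟩ := by
      apply Subtype.ext; rfl
    have hneg2 : Submodule.inclusion h1222
        (⟨-(T22inv (T21 f.1) : H₂), neg_mem ((hDS f.1).mp f.2)⟩ : D12)
        = -(T22inv (T21 f.1)) := by
      apply Subtype.ext; rfl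
    refine Prod.ext ?_ ?_
    · simp only [hneg, map_neg]
      abel
    · simp only [hneg2, map_neg, hright]
      abel
  -- backward direction: if 𝒯 p = (y, 0) then y ∈ range S
  have bwd : ∀ (p : D21 × D12) (y : H₁), 𝒯 p = (y, 0) → ∃ f : DS, S f = y := by
    intro p y hp
    rw [h𝒯] at hp
    have h2 : T21 p.1 + T22 (Submodule.inclusion h1222 p.2) = 0 :=
      congrArg Prod.snd hp
    have h1 : T11 p.1 + T12 p.2 = y := congrArg Prod.fst hp
    have hval : T21 p.1 = -(T22 (Submodule.inclusion h1222 p.2)) :=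
      eq_neg_of_add_eq_zero_left h2
    have hinv : T22inv (T21 p.1) = -(Submodule.inclusion h1222 p.2) := by
      rw [hval, map_neg, hleft]
    have hcoe : (T22inv (T21 p.1) : H₂) = -(p.2 : H₂) := by
      rw [hinv]; rfl
    have hmem : p.1 ∈ DS := (hDS p.1).mpr (hcoe ▸ neg_mem p.2.2)
    refine ⟨⟨p.1, hmem⟩, ?_⟩
    rw [hS]
    have harg : (⟨(T22inv (T21 p.1) : H₂), (hDS p.1).mp hmem⟩ : D12) = -p.2 :=
      Subtype.ext hcoe
    rw [harg, map_neg]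
    rw [← h1]; abel
  constructor
  · ext ⟨y₁, y₂⟩
    simp only [Set.mem_prod, Set.mem_range, Set.mem_inter_iff, Set.mem_singleton_iff,
      Set.mem_univ, true_and]
    constructor
    · rintro ⟨⟨f, rfl⟩, rfl⟩
      exact ⟨fwd f, rfl⟩
    · rintro ⟨⟨p, hp⟩, rfl⟩
      exact ⟨bwd p y₁ hp, rfl⟩
  · constructor
    · intro hsurj y
      obtain ⟨p, hp⟩ := hsurj (y, 0)
      exact bwd p y hp
    · intro hsurj ⟨y₁, y₂⟩
      obtain ⟨f₁, hf₁⟩ := hT21surj y₂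
      obtain ⟨f₂, hf₂⟩ := hsurj (y₁ - T11 f₁)
      obtain ⟨p, hp⟩ := fwd f₂
      refine ⟨(f₁, 0) + p, ?_⟩
      rw [map_add, hp, hf₂, h𝒯]
      simp [hf₁]
end

section
/- For every real λ > c₂ the bounded operator λ·I − T₂₂ is invertible in the algebra of bounded operators on H₂, and for every x ∈ D(T₁₂†) such that (λ·I − T₂₂)⁻¹(T₁₂† x) ∈ D(T₁₂), the inner product ⟪x, T₁₁ x − λ x − T₁₂((T₂₂ − λ·I)⁻¹(T₁₂† x))⟫ is real and satisfies ⟪x, T₁₁ x − λ x − T₁₂((T₂₂ − λ·I)⁻¹(T₁₂† x))⟫ ≥ (c₁ − λ)‖x‖². (This says the minimal Schur complement S₁(λ) = T₁₁ − λ − T₁₂(T₂₂ − λ)⁻¹T₁₂† is formally symmetric and bounded from below by c₁ − λ.) -/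
/-- For `λ > c₂`, `λ·I − T₂₂` is invertible among bounded operators on `H₂`,
and the minimal Schur complement `S₁(λ) = T₁₁ − λ − T₁₂(T₂₂ − λ)⁻¹T₁₂†` is formally symmetric
and bounded from below by `c₁ − λ`: for `x` in its domain, `⟪x, S₁(λ)x⟫` is real and
`⟪x, S₁(λ)x⟫ ≥ (c₁ − λ)‖x‖²`. -/
theorem stmt_3 {H₁ H₂ : Type*}
    [NormedAddCommGroup H₁] [InnerProductSpace ℂ H₁] [CompleteSpace H₁]
    [NormedAddCommGroup H₂] [InnerProductSpace ℂ H₂] [CompleteSpace H₂]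
    (T12 : H₂ →ₗ.[ℂ] H₁) (hdense : Dense (T12.domain : Set H₂)) (hclosed : T12.IsClosed)
    (T22 : H₂ →L[ℂ] H₂) (hT22 : IsSelfAdjoint T22)
    (c₂ : ℝ) (hc2 : ∀ y : H₂, (inner ℂ y (T22 y) : ℂ).re ≤ c₂ * ‖y‖ ^ 2)
    (T11 : T12.adjoint.domain →ₗ[ℂ] H₁)
    (hsymm : ∀ x x' : T12.adjoint.domain,
      (inner ℂ (x : H₁) (T11 x') : ℂ) = inner ℂ (T11 x) (x' : H₁))
    (c₁ : ℝ) (hc1 : ∀ x : T12.adjoint.domain,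
      c₁ * ‖(x : H₁)‖ ^ 2 ≤ (inner ℂ (x : H₁) (T11 x) : ℂ).re)
    (lam : ℝ) (hlam : c₂ < lam) :
    IsUnit ((lam : ℂ) • (1 : H₂ →L[ℂ] H₂) - T22) ∧
    ∀ (x : T12.adjoint.domain)
      (hm : Ring.inverse ((lam : ℂ) • (1 : H₂ →L[ℂ] H₂) - T22) (T12.adjoint x) ∈ T12.domain)
      (Sx : H₁),
      Sx = T11 x - (lam : ℂ) • (x : H₁) -
        T12 ⟨-(Ring.inverse ((lam : ℂ) • (1 : H₂ →L[ℂ] H₂) - T22) (T12.adjoint x)),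
          T12.domain.neg_mem hm⟩ →
      (inner ℂ (x : H₁) Sx : ℂ).im = 0 ∧
      (c₁ - lam) * ‖(x : H₁)‖ ^ 2 ≤ (inner ℂ (x : H₁) Sx : ℂ).re := by
  set A : H₂ →L[ℂ] H₂ := (lam : ℂ) • (1 : H₂ →L[ℂ] H₂) - T22 with hA_def
  -- A is self-adjoint
  have hA : IsSelfAdjoint A := by
    rw [hA_def]
    refine IsSelfAdjoint.sub ?_ hT22
    rw [IsSelfAdjoint, star_smul, star_one, Complex.star_def, Complex.conj_ofReal]
  -- quadratic form lower bound for A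
  have hquad : ∀ y : H₂, (lam - c₂) * ‖y‖ ^ 2 ≤ (inner ℂ y (A y) : ℂ).re := by
    intro y
    have : (inner ℂ y (A y) : ℂ) = (lam : ℂ) * inner ℂ y y - inner ℂ y (T22 y) := by
      rw [hA_def]
      simp only [ContinuousLinearMap.sub_apply, ContinuousLinearMap.smul_apply,
        ContinuousLinearMap.one_apply, inner_sub_right, inner_smul_right]
    rw [this]
    have h2 : ((lam : ℂ) * inner ℂ y y).re = lam * ‖y‖ ^ 2 := by
      rw [inner_self_eq_norm_sq_to_K]
      norm_cast
      rw [show (Algebra.cast (‖y‖ ^ 2 : ℝ) : ℂ) = ((‖y‖ ^ 2 : ℝ) : ℂ) from rfl,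
        ← Complex.ofReal_mul, Complex.ofReal_re]
    rw [Complex.sub_re, h2]
    nlinarith [hc2 y, sq_nonneg ‖y‖]
  have hlc : (0 : ℝ) < lam - c₂ := by linarith
  -- Part 1: A is a unit
  have hcoe : ((⟨lam - c₂, hlc.le⟩ : NNReal) : ℝ) = lam - c₂ := rfl
  have hunit : IsUnit A := by
    refine ContinuousLinearMap.isUnit_of_forall_le_norm_inner_map A (c := ⟨lam - c₂, hlc.le⟩)
      (by exact_mod_cast hlc) ?_
    intro y
    have h1 : (lam - c₂) * ‖y‖ ^ 2 ≤ (inner ℂ y (A y) : ℂ).re := hquad y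
    have h2 : (inner ℂ y (A y) : ℂ).re ≤ ‖(inner ℂ y (A y) : ℂ)‖ := Complex.re_le_norm _
    have h3 : ‖(inner ℂ (A y) y : ℂ)‖ = ‖(inner ℂ y (A y) : ℂ)‖ := by
      rw [← inner_conj_symm y (A y), RCLike.norm_conj]
    rw [h3]
    have hgoal : ‖y‖ ^ 2 * (lam - c₂) ≤ ‖(inner ℂ y (A y) : ℂ)‖ := by
      calc ‖y‖ ^ 2 * (lam - c₂) = (lam - c₂) * ‖y‖ ^ 2 := by ring
        _ ≤ _ := h1.trans h2
    exact hgoal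
  refine ⟨hunit, ?_⟩
  intro x hm Sx hSx
  set y : H₂ := Ring.inverse A (T12.adjoint x) with hy_def
  have hAy : A y = T12.adjoint x := by
    have := congrFun (congrArg DFunLike.coe (Ring.mul_inverse_cancel A hunit)) (T12.adjoint x)
    simpa [ContinuousLinearMap.mul_apply] using this
  set Y : T12.domain := ⟨y, hm⟩ with hY_def
  -- T12 at the negated element
  have hneg : T12 ⟨-y, T12.domain.neg_mem hm⟩ = -(T12 Y) := by
    have h1 : (⟨-y, T12.domain.neg_mem hm⟩ : T12.domain) = -Y := rfl
    rw [h1]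
    exact map_neg T12.toFun Y
  -- formal adjoint property
  have hadj : (inner ℂ (T12.adjoint x : H₂) (Y : H₂) : ℂ) = inner ℂ (x : H₁) (T12 Y) :=
    T12.adjoint_isFormalAdjoint hdense x Y
  -- expand inner ℂ product
  have hexp : (inner ℂ (x : H₁) Sx : ℂ)
      = inner ℂ (x : H₁) (T11 x) - ((lam * ‖(x : H₁)‖ ^ 2 : ℝ) : ℂ) + inner ℂ (A y) y := by
    rw [hSx, hneg]
    rw [inner_sub_right, inner_sub_right, inner_smul_right, inner_neg_right,
      inner_self_eq_norm_sq_to_K, ← hadj]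
    have h' : (inner ℂ (T12.adjoint x : H₂) (Y : H₂) : ℂ) = inner ℂ (A y) y := by
      rw [hAy]
    rw [h']
    push_cast [Complex.coe_algebraMap]
    ring
  -- realness facts
  have hr1 : (starRingEnd ℂ) (inner ℂ (x : H₁) (T11 x) : ℂ) = inner ℂ (x : H₁) (T11 x) := by
    rw [inner_conj_symm, hsymm x x]
  have hr2 : (starRingEnd ℂ) (inner ℂ (A y) y : ℂ) = inner ℂ (A y) y := by
    rw [inner_conj_symm]
    exact (hA.isSymmetric y y).symm
  have him1 : (inner ℂ (x : H₁) (T11 x) : ℂ).im = 0 :=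
    Complex.conj_eq_iff_im.mp hr1
  have him2 : (inner ℂ (A y) y : ℂ).im = 0 :=
    Complex.conj_eq_iff_im.mp hr2
  have hre2 : (inner ℂ (A y) y : ℂ).re = (inner ℂ y (A y) : ℂ).re := by
    rw [← inner_conj_symm y (A y), Complex.conj_re]
  constructor
  · rw [hexp]
    rw [Complex.add_im, Complex.sub_im, him1, him2, Complex.ofReal_im]
    ring
  · rw [hexp]
    have hA_nonneg : 0 ≤ (inner ℂ (A y) y : ℂ).re := by
      rw [hre2]
      have := hquad y
      nlinarith [sq_nonneg ‖y‖]
    have h1 := hc1 x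
    rw [Complex.add_re, Complex.sub_re, Complex.ofReal_re]
    nlinarith
end

section
/- For every real λ > c₂ the set D(S₁(λ)) := {x ∈ D(T₁₂†) : (λ·I − T₂₂)⁻¹(T₁₂† x) ∈ D(T₁₂)} is a dense linear subspace of H₁, where (λ·I − T₂₂)⁻¹ denotes the inverse of the (invertible) bounded operator λ·I − T₂₂. -/
lemma re_inner_self {H : Type*} [NormedAddCommGroup H] [InnerProductSpace ℂ H] (x : H) :
    (inner ℂ x x : ℂ).re = ‖x‖ ^ 2 := by
  have := inner_self_eq_norm_sq (𝕜 := ℂ) (x := x)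
  simpa using this

lemma aux_isUnit {H : Type*} [NormedAddCommGroup H] [InnerProductSpace ℂ H] [CompleteSpace H]
    (K : H →L[ℂ] H) (c : ℝ) (hc : 0 < c)
    (hK : ∀ x : H, c * ‖x‖ ^ 2 ≤ (inner ℂ x (K x) : ℂ).re) : IsUnit K := by
  have hbound : ∀ x : H, c * ‖x‖ ≤ ‖K x‖ := by
    intro x
    rcases eq_or_ne x 0 with rfl | hx
    · simp
    · have h1 : c * ‖x‖ ^ 2 ≤ ‖x‖ * ‖K x‖ := by
        calc c * ‖x‖ ^ 2 ≤ (inner ℂ x (K x) : ℂ).re := hK x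
        _ ≤ ‖(inner ℂ x (K x) : ℂ)‖ := Complex.re_le_norm _
        _ ≤ ‖x‖ * ‖K x‖ := norm_inner_le_norm _ _
      have hxpos : (0:ℝ) < ‖x‖ := norm_pos_iff.mpr hx
      nlinarith
  have hker : LinearMap.ker (K : H →ₗ[ℂ] H) = ⊥ := by
    rw [LinearMap.ker_eq_bot']
    intro x hx
    have h := hbound x
    rw [show K x = 0 from hx, norm_zero] at h
    have h2 : ‖x‖ ≤ 0 := by nlinarith
    simpa using le_antisymm h2 (norm_nonneg x)
  have hanti : AntilipschitzWith c.toNNReal⁻¹ K := by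
    apply K.antilipschitz_of_bound
    intro x
    rw [NNReal.coe_inv, Real.coe_toNNReal _ hc.le]
    rw [inv_mul_eq_div, le_div_iff₀ hc, mul_comm]
    exact hbound x
  have hclosed : IsClosed (LinearMap.range (K : H →ₗ[ℂ] H) : Set H) :=
    hanti.isClosed_range K.uniformContinuous
  have horth : (LinearMap.range (K : H →ₗ[ℂ] H))ᗮ = ⊥ := by
    rw [Submodule.eq_bot_iff]
    intro v hv
    have h0 : (inner ℂ (K v) v : ℂ) = 0 := hv (K v) (LinearMap.mem_range_self _ v)
    have h1 : (inner ℂ v (K v) : ℂ).re = 0 := by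
      rw [← inner_conj_symm, h0]; simp
    have h2 := hK v
    rw [h1] at h2
    by_contra hne
    have hp : 0 < ‖v‖ := norm_pos_iff.mpr hne
    have : 0 < c * ‖v‖ ^ 2 := by positivity
    linarith
  have hrange : LinearMap.range (K : H →ₗ[ℂ] H) = ⊤ := by
    have := (Submodule.topologicalClosure_eq_top_iff (K := LinearMap.range (K : H →ₗ[ℂ] H))).mpr horth
    rwa [hclosed.submodule_topologicalClosure_eq] at this
  let e := ContinuousLinearEquiv.ofBijective K hker hrange
  refine ⟨⟨K, (e.symm : H →L[ℂ] H), ?_, ?_⟩, rfl⟩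
  · ext x
    simp [e, e.apply_symm_apply x]
  · ext x
    simp [e, e.symm_apply_apply x]

/-- For every `λ > c₂`, the domain
`D(S₁(λ)) = {x ∈ D(T₁₂†) : (λ·I − T₂₂)⁻¹(T₁₂†x) ∈ D(T₁₂)}` is a dense linear subspace of `H₁`. -/
theorem stmt_4 {H₁ H₂ : Type*}
    [NormedAddCommGroup H₁] [InnerProductSpace ℂ H₁] [CompleteSpace H₁]
    [NormedAddCommGroup H₂] [InnerProductSpace ℂ H₂] [CompleteSpace H₂]
    (T12 : H₂ →ₗ.[ℂ] H₁) (hdense : Dense (T12.domain : Set H₂)) (hclosed : T12.IsClosed)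
    (T22 : H₂ →L[ℂ] H₂) (hT22 : IsSelfAdjoint T22)
    (c₂ : ℝ) (hc2 : ∀ y : H₂, (inner ℂ y (T22 y) : ℂ).re ≤ c₂ * ‖y‖ ^ 2)
    (lam : ℝ) (hlam : c₂ < lam) :
    ∃ p : Submodule ℂ H₁,
      (p : Set H₁) = {x : H₁ | ∃ hx : x ∈ T12.adjoint.domain,
        Ring.inverse ((lam : ℂ) • (1 : H₂ →L[ℂ] H₂) - T22) (T12.adjoint ⟨x, hx⟩) ∈ T12.domain} ∧
      Dense (p : Set H₁) := by
  set A : H₂ →L[ℂ] H₂ := (lam : ℂ) • (1 : H₂ →L[ℂ] H₂) - T22 with hAdef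
  -- coercivity of A
  have hAcoer : ∀ y : H₂, (lam - c₂) * ‖y‖ ^ 2 ≤ (inner ℂ y (A y) : ℂ).re := by
    intro y
    have h1 : (inner ℂ y (A y) : ℂ) = (lam : ℂ) * (inner ℂ y y : ℂ) - inner ℂ y (T22 y) := by
      rw [hAdef]
      simp only [ContinuousLinearMap.sub_apply, ContinuousLinearMap.smul_apply,
        ContinuousLinearMap.one_apply, inner_sub_right, inner_smul_right]
    rw [h1]
    have h2 : ((lam : ℂ) * (inner ℂ y y : ℂ)).re = lam * ‖y‖ ^ 2 := by
      rw [Complex.mul_re, Complex.ofReal_re, Complex.ofReal_im, re_inner_self]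
      ring
    rw [Complex.sub_re, h2]
    have := hc2 y
    linarith
  have hAunit : IsUnit A :=
    aux_isUnit A (lam - c₂) (by linarith) fun y => hAcoer y
  set R : H₂ →L[ℂ] H₂ := Ring.inverse A with hRdef
  have hRA : ∀ y : H₂, R (A y) = y := by
    intro y
    have : (R * A) y = (1 : H₂ →L[ℂ] H₂) y := by rw [Ring.inverse_mul_cancel A hAunit]
    simpa using this
  have hAR : ∀ y : H₂, A (R y) = y := by
    intro y
    have : (A * R) y = (1 : H₂ →L[ℂ] H₂) y := by rw [Ring.mul_inverse_cancel A hAunit]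
    simpa using this
  set Tadj : H₁ →ₗ.[ℂ] H₂ := T12.adjoint with hTadef
  -- the submodule
  set S : Set H₁ := {x : H₁ | ∃ hx : x ∈ Tadj.domain, R (Tadj ⟨x, hx⟩) ∈ T12.domain} with hSdef
  have hzero : (0 : H₁) ∈ S := by
    refine ⟨zero_mem _, ?_⟩
    have h0 : (⟨0, zero_mem _⟩ : Tadj.domain) = 0 := rfl
    rw [h0, LinearPMap.map_zero, map_zero]
    exact zero_mem _
  have hadd : ∀ {a b : H₁}, a ∈ S → b ∈ S → a + b ∈ S := by
    rintro a b ⟨ha, ha'⟩ ⟨hb, hb'⟩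
    refine ⟨add_mem ha hb, ?_⟩
    have h0 : (⟨a + b, add_mem ha hb⟩ : Tadj.domain) = ⟨a, ha⟩ + ⟨b, hb⟩ := rfl
    rw [h0, LinearPMap.map_add, map_add]
    exact add_mem ha' hb'
  have hsmul : ∀ (c : ℂ) {a : H₁}, a ∈ S → c • a ∈ S := by
    rintro c a ⟨ha, ha'⟩
    refine ⟨Submodule.smul_mem _ c ha, ?_⟩
    have h0 : (⟨c • a, Submodule.smul_mem _ c ha⟩ : Tadj.domain) = c • (⟨a, ha⟩ : Tadj.domain) :=
      rfl
    rw [h0, LinearPMap.map_smul, map_smul]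
    exact Submodule.smul_mem _ c ha'
  let p : Submodule ℂ H₁ :=
    { carrier := S, zero_mem' := hzero, add_mem' := hadd, smul_mem' := hsmul }
  refine ⟨p, rfl, ?_⟩
  -- ambient Hilbert space and the graph of T12 as a closed subspace
  set amb := WithLp 2 (H₂ × H₁) with hambdef
  set eC : amb ≃L[ℂ] H₂ × H₁ := WithLp.prodContinuousLinearEquiv 2 ℂ H₂ H₁ with heCdef
  set G : Submodule ℂ amb :=
    Submodule.comap (eC.toLinearEquiv : amb →ₗ[ℂ] H₂ × H₁) T12.graph with hGdef
  have hmemG : ∀ v : amb, v ∈ G ↔ eC v ∈ T12.graph := fun v => Iff.rfl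
  have hGclosed : IsClosed (G : Set amb) := by
    have h1 : (G : Set amb) = eC ⁻¹' (T12.graph : Set (H₂ × H₁)) := rfl
    rw [h1]
    exact hclosed.preimage eC.continuous
  haveI : CompleteSpace G := hGclosed.completeSpace_coe
  -- inner ℂ products of images of eC.symm
  have hinner : ∀ a b : H₂ × H₁,
      (inner ℂ (eC.symm a) (eC.symm b) : ℂ) = inner ℂ a.1 b.1 + inner ℂ a.2 b.2 := by
    intro a b
    rw [WithLp.prod_inner_apply]
    rfl
  have hsymmG : ∀ g : G, (g : amb) = eC.symm (eC (g : amb)) := by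
    intro g
    rw [eC.symm_apply_apply]
  -- the operators J and Kop
  let J : G →L[ℂ] amb := (eC.symm : (H₂ × H₁) →L[ℂ] amb).comp
    ((A.prodMap (ContinuousLinearMap.id ℂ H₁)).comp
      ((eC : amb →L[ℂ] H₂ × H₁).comp G.subtypeL))
  have hJ : ∀ g : G, J g = eC.symm (A (eC (g : amb)).1, (eC (g : amb)).2) := by
    intro g
    rfl
  let Kop : G →L[ℂ] G := G.orthogonalProjectionOnto.comp J
  have hKop : ∀ g : G, Kop g = G.orthogonalProjectionOnto (J g) := fun g => rfl
  -- projection pairing lemmas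
  have hproj : ∀ (v : amb) (g : G),
      (inner ℂ ((G.orthogonalProjectionOnto v : G) : amb) (g : amb) : ℂ) = inner ℂ v (g : amb) := by
    intro v g
    have h := Submodule.starProjection_inner_eq_zero (K := G) v (g : amb) g.2
    rw [inner_sub_left, sub_eq_zero] at h
    exact h.symm
  have hsec : ∀ (v : amb) (g : G),
      (inner ℂ (g : amb) ((G.orthogonalProjectionOnto v : G) : amb) : ℂ) = inner ℂ (g : amb) v := by
    intro v g
    rw [← inner_conj_symm, hproj, inner_conj_symm]
  -- coercivity of Kop
  set c : ℝ := min (lam - c₂) 1 with hcdef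
  have hc : 0 < c := lt_min (by linarith) one_pos
  have hcoer : ∀ g : G, c * ‖g‖ ^ 2 ≤ (inner ℂ g (Kop g) : ℂ).re := by
    intro g
    have h1 : (inner ℂ g (Kop g) : ℂ) = inner ℂ (g : amb) (J g) := by
      rw [Submodule.coe_inner, hKop, hsec]
    have h2 : (inner ℂ (g : amb) (J g) : ℂ) =
        inner ℂ (eC (g : amb)).1 (A (eC (g : amb)).1) + inner ℂ (eC (g : amb)).2 (eC (g : amb)).2 := by
      conv_lhs => rw [hsymmG g, hJ g]
      rw [hinner]
    set y := (eC (g : amb)).1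
    set v := (eC (g : amb)).2
    have h3 : (inner ℂ v v : ℂ).re = ‖v‖ ^ 2 := re_inner_self v
    have h4 : (lam - c₂) * ‖y‖ ^ 2 ≤ (inner ℂ y (A y) : ℂ).re := hAcoer y
    have h5 : ‖g‖ ^ 2 = ‖y‖ ^ 2 + ‖v‖ ^ 2 := by
      have := WithLp.prod_norm_sq_eq_of_L2 (g : amb)
      have hfst : (g : amb).fst = y := rfl
      have hsnd : (g : amb).snd = v := rfl
      rw [hfst, hsnd] at this
      rw [← this]
      rfl
    rw [h1, h2, Complex.add_re, h5]
    have hcy : c ≤ lam - c₂ := min_le_left _ _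
    have hc1 : c ≤ 1 := min_le_right _ _
    nlinarith [sq_nonneg ‖y‖, sq_nonneg ‖v‖, h4, h3]
  have hKunit : IsUnit Kop := aux_isUnit Kop c hc hcoer
  -- the solver
  have key : ∀ u : H₁, ∃ (x : H₁) (hx : x ∈ Tadj.domain)
      (hw : R (Tadj ⟨x, hx⟩) ∈ T12.domain), x + T12 ⟨R (Tadj ⟨x, hx⟩), hw⟩ = u := by
    intro u
    set b : G := G.orthogonalProjectionOnto (eC.symm (0, u)) with hbdef
    obtain ⟨g, hg⟩ : ∃ g : G, Kop g = b := by
      obtain ⟨W, hW⟩ := hKunit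
      refine ⟨(↑W⁻¹ : ↥G →L[ℂ] ↥G) b, ?_⟩
      calc Kop ((↑W⁻¹ : ↥G →L[ℂ] ↥G) b)
          = ((W : ↥G →L[ℂ] ↥G) * (↑W⁻¹ : ↥G →L[ℂ] ↥G)) b := by rw [hW]; rfl
        _ = b := by rw [Units.mul_inv]; rfl
    obtain ⟨z, hz1, hz2⟩ := T12.mem_graph_iff.mp ((hmemG _).mp g.2)
    have hgeq : eC (g : amb) = ((z : H₂), T12 z) := Prod.ext hz1.symm hz2.symm
    -- the variational identity
    have hvar : ∀ w' : T12.domain,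
        (inner ℂ (A (z : H₂)) (w' : H₂) : ℂ) + inner ℂ (T12 z) (T12 w') = inner ℂ u (T12 w') := by
      intro w'
      have hg'mem : eC.symm ((w' : H₂), T12 w') ∈ G := by
        rw [hmemG, eC.apply_symm_apply]
        exact T12.mem_graph w'
      set g' : G := ⟨eC.symm ((w' : H₂), T12 w'), hg'mem⟩ with hg'def
      have h1 : (inner ℂ ((Kop g : G) : amb) (g' : amb) : ℂ) = inner ℂ ((b : G) : amb) (g' : amb) := by
        rw [hg]
      have hL : (inner ℂ ((Kop g : G) : amb) (g' : amb) : ℂ) =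
          inner ℂ (A (z : H₂)) (w' : H₂) + inner ℂ (T12 z) (T12 w') := by
        rw [hKop, hproj]
        have : J g = eC.symm (A (z : H₂), T12 z) := by rw [hJ, hgeq]
        rw [this]
        show (inner ℂ (eC.symm (A (z : H₂), T12 z)) (eC.symm ((w' : H₂), T12 w')) : ℂ) = _
        rw [hinner]
      have hR : (inner ℂ ((b : G) : amb) (g' : amb) : ℂ) = inner ℂ u (T12 w') := by
        rw [hbdef, hproj]
        show (inner ℂ (eC.symm ((0 : H₂), u)) (eC.symm ((w' : H₂), T12 w')) : ℂ) = _
        rw [hinner]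
        simp
      rw [← hL, h1, hR]
    -- build the solution
    set x : H₁ := u - T12 z with hxdef
    have hxadj : ∀ w' : T12.domain, (inner ℂ (A (z : H₂)) (w' : H₂) : ℂ) = inner ℂ x (T12 w') := by
      intro w'
      rw [hxdef, inner_sub_left, ← hvar w']
      ring
    have hxmem : x ∈ Tadj.domain :=
      LinearPMap.mem_adjoint_domain_of_exists x ⟨A (z : H₂), fun w' => hxadj w'⟩
    have hTx : Tadj ⟨x, hxmem⟩ = A (z : H₂) :=
      LinearPMap.adjoint_apply_eq hdense ⟨x, hxmem⟩ fun w' => hxadj w'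
    have hw : R (Tadj ⟨x, hxmem⟩) ∈ T12.domain := by
      rw [hTx, hRA]
      exact z.2
    refine ⟨x, hxmem, hw, ?_⟩
    have hzeq : (⟨R (Tadj ⟨x, hxmem⟩), hw⟩ : T12.domain) = z := by
      apply Subtype.ext
      show R (Tadj ⟨x, hxmem⟩) = (z : H₂)
      rw [hTx, hRA]
    rw [hzeq, hxdef]
    abel
  -- density via orthogonal complement
  have horthp : pᗮ = ⊥ := by
    rw [Submodule.eq_bot_iff]
    intro u hu
    obtain ⟨x, hx, hw, hsum⟩ := key u
    have hxp : x ∈ p := ⟨hx, hw⟩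
    have h0 : (inner ℂ x u : ℂ) = 0 := (Submodule.mem_orthogonal _ _).mp hu x hxp
    set w : T12.domain := ⟨R (Tadj ⟨x, hx⟩), hw⟩ with hwdef
    have hformal : (inner ℂ (Tadj ⟨x, hx⟩) (w : H₂) : ℂ) = inner ℂ x (T12 w) :=
      LinearPMap.adjoint_isFormalAdjoint hdense ⟨x, hx⟩ w
    have hATw : A (w : H₂) = Tadj ⟨x, hx⟩ := hAR _
    have h1 : (inner ℂ x u : ℂ) = inner ℂ x x + inner ℂ (A (w : H₂)) (w : H₂) := by
      rw [← hsum, inner_add_right, hATw, hformal]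
    rw [h0] at h1
    have h2 : (0 : ℝ) = ‖x‖ ^ 2 + (inner ℂ (A (w : H₂)) (w : H₂) : ℂ).re := by
      have hre := congrArg Complex.re h1
      rw [Complex.add_re] at hre
      have hxx : (inner ℂ x x : ℂ).re = ‖x‖ ^ 2 := re_inner_self x
      rw [hxx] at hre
      simpa using hre
    have hpos : (0 : ℝ) ≤ (inner ℂ (A (w : H₂)) (w : H₂) : ℂ).re := by
      have hconj : (inner ℂ (A (w : H₂)) (w : H₂) : ℂ).re = (inner ℂ (w : H₂) (A (w : H₂)) : ℂ).re := by
        rw [← inner_conj_symm]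
        exact Complex.conj_re _
      rw [hconj]
      have := hAcoer (w : H₂)
      nlinarith [sq_nonneg ‖(w : H₂)‖]
    have hx0 : x = 0 := by
      have hxle : ‖x‖ ^ 2 ≤ 0 := by linarith
      have : ‖x‖ = 0 := by nlinarith [norm_nonneg x]
      simpa using this
    have h3 : (⟨x, hx⟩ : Tadj.domain) = 0 := Subtype.ext hx0
    have h4 : (w : H₂) = 0 := by
      show R (Tadj ⟨x, hx⟩) = 0
      rw [h3, LinearPMap.map_zero, map_zero]
    have h5 : w = 0 := Subtype.ext h4
    rw [hx0, h5, LinearPMap.map_zero] at hsum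
    rw [← hsum]
    simp
  have htop : p.topologicalClosure = ⊤ := Submodule.topologicalClosure_eq_top_iff.mpr horthp
  exact Submodule.dense_iff_topologicalClosure_eq_top.mpr htop
end

section
/- Fix x ∈ D(T₁₂†) with x ≠ 0 and define σ : (c₂, ∞) → ℝ by σ(λ) = re⟪x, T₁₁ x⟫ − λ‖x‖² − re⟪T₁₂† x, (T₂₂ − λ·I)⁻¹(T₁₂† x)⟫. Then: (i) at every λ > c₂ the function σ is differentiable with derivative σ'(λ) = −‖x‖² − ‖(T₂₂ − λ·I)⁻¹(T₁₂† x)‖²; (ii) σ is strictly decreasing on (c₂, ∞); (iii) σ(λ) → −∞ as λ → ∞. -/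
open ContinuousLinearMap Filter

section Aux

variable {H : Type*} [NormedAddCommGroup H] [InnerProductSpace ℂ H] [CompleteSpace H]

lemma aux_bddBelow (B : H →L[ℂ] H) (ε : ℝ)
    (hB : ∀ y : H, ε * ‖y‖ ^ 2 ≤ (inner ℂ y (B y) : ℂ).re) :
    ∀ y : H, ε * ‖y‖ ≤ ‖B y‖ := by
  intro y
  rcases eq_or_ne y 0 with rfl | hy
  · simp
  · have hy' : 0 < ‖y‖ := norm_pos_iff.mpr hy
    have h1 : ε * ‖y‖ * ‖y‖ ≤ ‖B y‖ * ‖y‖ := by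
      calc ε * ‖y‖ * ‖y‖ = ε * ‖y‖ ^ 2 := by ring
      _ ≤ (inner ℂ y (B y) : ℂ).re := hB y
      _ ≤ ‖(inner ℂ y (B y) : ℂ)‖ := Complex.re_le_norm _
      _ ≤ ‖y‖ * ‖B y‖ := norm_inner_le_norm _ _
      _ = ‖B y‖ * ‖y‖ := mul_comm _ _
    exact le_of_mul_le_mul_right h1 hy'

lemma aux_isUnit_s7 (B : H →L[ℂ] H) (ε : ℝ) (hε : 0 < ε)
    (hB : ∀ y : H, ε * ‖y‖ ^ 2 ≤ (inner ℂ y (B y) : ℂ).re) : IsUnit B := by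
  have hbb := aux_bddBelow B ε hB
  have anti : AntilipschitzWith (⟨ε⁻¹, by positivity⟩ : NNReal) B := by
    apply B.antilipschitz_of_bound
    intro y
    show ‖y‖ ≤ ε⁻¹ * ‖B y‖
    calc ‖y‖ = ε⁻¹ * (ε * ‖y‖) := by rw [inv_mul_cancel_left₀ hε.ne']
    _ ≤ ε⁻¹ * ‖B y‖ := by
        have h := hbb y
        gcongr
  have hker : B.ker = ⊥ := LinearMap.ker_eq_bot.mpr anti.injective
  haveI : CompleteSpace (B.range) := anti.completeSpace_range_clm
  have horth : (B.range)ᗮ = ⊥ := by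
    rw [Submodule.eq_bot_iff]
    intro w hw
    have h0 : (inner ℂ (B w) w : ℂ) = 0 :=
      (Submodule.mem_orthogonal _ _).1 hw (B w) (LinearMap.mem_range_self _ w)
    have h1 : (inner ℂ w (B w) : ℂ) = 0 := by
      rw [← inner_conj_symm, h0, map_zero]
    have h2 := hB w
    rw [h1] at h2
    simp only [Complex.zero_re] at h2
    by_contra hw'
    have hwp : 0 < ‖w‖ := norm_pos_iff.mpr hw'
    nlinarith [pow_pos hwp 2]
  have hrange : B.range = ⊤ := Submodule.orthogonal_eq_bot_iff.mp horth
  exact ⟨(ContinuousLinearEquiv.unitsEquiv ℂ H).symm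
    (ContinuousLinearEquiv.ofBijective B hker hrange), rfl⟩

end Aux

set_option maxHeartbeats 1000000 in
/-- For fixed nonzero `x ∈ D(T₁₂†)`, the function
`σ(λ) = re⟪x, T₁₁x⟫ − λ‖x‖² − re⟪T₁₂†x, (T₂₂ − λ)⁻¹(T₁₂†x)⟫` on `(c₂, ∞)` is differentiable
with derivative `σ'(λ) = −‖x‖² − ‖(T₂₂ − λ)⁻¹(T₁₂†x)‖²`, strictly decreasing, and tends to
`−∞` as `λ → ∞`. -/
theorem stmt_7 {H₁ H₂ : Type*}
    [NormedAddCommGroup H₁] [InnerProductSpace ℂ H₁] [CompleteSpace H₁]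
    [NormedAddCommGroup H₂] [InnerProductSpace ℂ H₂] [CompleteSpace H₂]
    (T12 : H₂ →ₗ.[ℂ] H₁) (hdense : Dense (T12.domain : Set H₂)) (hclosed : T12.IsClosed)
    (T22 : H₂ →L[ℂ] H₂) (hT22 : IsSelfAdjoint T22)
    (c₂ : ℝ) (hc2 : ∀ y : H₂, (inner ℂ y (T22 y) : ℂ).re ≤ c₂ * ‖y‖ ^ 2)
    (T11 : T12.adjoint.domain →ₗ[ℂ] H₁)
    (hsymm : ∀ x x' : T12.adjoint.domain,
      (inner ℂ (x : H₁) (T11 x') : ℂ) = inner ℂ (T11 x) (x' : H₁))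
    (x : T12.adjoint.domain) (hxne : (x : H₁) ≠ 0)
    (σ : ℝ → ℝ)
    (hσ : ∀ lam : ℝ, c₂ < lam →
      σ lam = (inner ℂ (x : H₁) (T11 x) : ℂ).re - lam * ‖(x : H₁)‖ ^ 2 -
        (inner ℂ (T12.adjoint x)
          (Ring.inverse (T22 - (lam : ℂ) • (1 : H₂ →L[ℂ] H₂)) (T12.adjoint x)) : ℂ).re) :
    (∀ lam : ℝ, c₂ < lam → HasDerivAt σ
      (-‖(x : H₁)‖ ^ 2 -
        ‖Ring.inverse (T22 - (lam : ℂ) • (1 : H₂ →L[ℂ] H₂)) (T12.adjoint x)‖ ^ 2) lam) ∧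
    StrictAntiOn σ (Set.Ioi c₂) ∧
    Filter.Tendsto σ Filter.atTop Filter.atBot := by
  set u : H₂ := T12.adjoint x with hu
  set A : ℝ → (H₂ →L[ℂ] H₂) := fun lam => T22 - (lam : ℂ) • 1 with hA
  set R : ℝ → (H₂ →L[ℂ] H₂) := fun lam => Ring.inverse (A lam) with hR
  -- coercivity of -(A lam)
  have hcoer : ∀ lam : ℝ, c₂ < lam → ∀ y : H₂,
      (lam - c₂) * ‖y‖ ^ 2 ≤ (inner ℂ y ((-(A lam)) y) : ℂ).re := by
    intro lam hlam y
    have h1 : (-(A lam)) y = (lam : ℂ) • y - T22 y := by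
      simp [hA]
    rw [h1, inner_sub_right, inner_smul_right]
    have h4 : (inner ℂ y y : ℂ).re = ‖y‖ ^ 2 := by
      simpa using inner_self_eq_norm_sq (𝕜 := ℂ) y
    have him : (inner ℂ y y : ℂ).im = 0 := by
      exact inner_self_im (𝕜 := ℂ) y
    have := hc2 y
    simp only [Complex.sub_re, Complex.mul_re, Complex.ofReal_re, Complex.ofReal_im,
      h4, him, zero_mul, mul_zero, sub_zero]
    nlinarith [sq_nonneg ‖y‖]
  have hunit : ∀ lam : ℝ, c₂ < lam → IsUnit (A lam) := by
    intro lam hlam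
    have h := aux_isUnit_s7 (-(A lam)) (lam - c₂) (by linarith) (hcoer lam hlam)
    simpa using h.neg
  -- self-adjointness
  have hsa : ∀ lam : ℝ, IsSelfAdjoint (A lam) := by
    intro lam
    refine hT22.sub ?_
    show star _ = _
    rw [star_smul, star_one, Complex.star_def, Complex.conj_ofReal]
  have hRsa : ∀ lam : ℝ, IsSelfAdjoint (R lam) := by
    intro lam
    rw [hR]
    show star _ = _
    rw [← Ring.inverse_star, (hsa lam).star_eq]
  -- bound on R
  have hRle : ∀ lam : ℝ, c₂ < lam → ∀ z : H₂, ‖R lam z‖ ≤ (lam - c₂)⁻¹ * ‖z‖ := by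
    intro lam hlam z
    have hAy : A lam (R lam z) = z := by
      have h := Ring.mul_inverse_cancel (A lam) (hunit lam hlam)
      calc A lam (R lam z) = (A lam * Ring.inverse (A lam)) z := rfl
      _ = z := by rw [h]; rfl
    have hb := aux_bddBelow (-(A lam)) (lam - c₂) (hcoer lam hlam) (R lam z)
    rw [ContinuousLinearMap.neg_apply, norm_neg, hAy] at hb
    have hc2' : (0:ℝ) < lam - c₂ := by linarith
    calc ‖R lam z‖ = (lam - c₂)⁻¹ * ((lam - c₂) * ‖R lam z‖) := by
          rw [inv_mul_cancel_left₀ hc2'.ne']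
    _ ≤ (lam - c₂)⁻¹ * ‖z‖ := by
          gcongr
  -- derivative of R
  have hderivR : ∀ lam : ℝ, c₂ < lam →
      HasDerivAt (fun t : ℝ => R t) (R lam * R lam) lam := by
    intro lam hlam
    obtain ⟨U, hU⟩ := hunit lam hlam
    have h0 : HasDerivAt (fun t : ℝ => t • (1 : H₂ →L[ℂ] H₂)) ((1:ℝ) • (1 : H₂ →L[ℂ] H₂)) lam :=
      (hasDerivAt_id lam).smul_const _
    have h0' : HasDerivAt (fun t : ℝ => (t:ℂ) • (1 : H₂ →L[ℂ] H₂)) (1 : H₂ →L[ℂ] H₂) lam := by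
      have he : (fun t : ℝ => (t:ℂ) • (1 : H₂ →L[ℂ] H₂)) = fun t : ℝ => t • (1 : H₂ →L[ℂ] H₂) := by
        funext t
        rw [← algebraMap_smul ℂ t (1 : H₂ →L[ℂ] H₂)]
        norm_num
      rw [he]
      simpa using h0
    have h1 : HasDerivAt A (-(1 : H₂ →L[ℂ] H₂)) lam := h0'.const_sub T22
    have hinvF := hasFDerivAt_ringInverse (𝕜 := ℝ) U
    rw [hU] at hinvF
    have h2 := hinvF.comp_hasDerivAt lam h1
    have h3 : (-(mulLeftRight ℝ (H₂ →L[ℂ] H₂) ↑U⁻¹ ↑U⁻¹)) (-(1 : H₂ →L[ℂ] H₂))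
        = R lam * R lam := by
      have hinv : ((U⁻¹ : (H₂ →L[ℂ] H₂)ˣ) : H₂ →L[ℂ] H₂) = R lam := by
        show _ = Ring.inverse (A lam)
        rw [← hU, Ring.inverse_unit]
      rw [ContinuousLinearMap.neg_apply, mulLeftRight_apply, hinv]
      simp
    rw [h3] at h2
    exact h2
  -- the scalar function
  set φ : (H₂ →L[ℂ] H₂) →L[ℝ] ℝ :=
    Complex.reCLM.comp (((innerSL ℂ u).comp ((ContinuousLinearMap.apply ℂ H₂) u)).restrictScalars ℝ)
    with hφ
  have hφapp : ∀ a : H₂ →L[ℂ] H₂, φ a = (inner ℂ u (a u) : ℂ).re := fun a => rfl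
  have hφval : ∀ lam : ℝ, c₂ < lam → φ (R lam * R lam) = ‖R lam u‖ ^ 2 := by
    intro lam hlam
    rw [hφapp]
    have h1 : (R lam * R lam) u = R lam (R lam u) := rfl
    have h2 : (inner ℂ u (R lam (R lam u)) : ℂ) = inner ℂ (R lam u) (R lam u) := by
      rw [← ContinuousLinearMap.adjoint_inner_left]
      congr 1
      rw [← ContinuousLinearMap.star_eq_adjoint, (hRsa lam).star_eq]
    rw [h1, h2]
    simpa using inner_self_eq_norm_sq (𝕜 := ℂ) (R lam u)
  have hf : ∀ lam : ℝ, c₂ < lam →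
      HasDerivAt (fun t : ℝ => (inner ℂ u (R t u) : ℂ).re) (‖R lam u‖ ^ 2) lam := by
    intro lam hlam
    have h := (φ.hasFDerivAt).comp_hasDerivAt lam (hderivR lam hlam)
    rw [hφval lam hlam] at h
    exact h
  -- the derivative of σ
  have hmain : ∀ lam : ℝ, c₂ < lam → HasDerivAt σ (-‖(x : H₁)‖ ^ 2 - ‖R lam u‖ ^ 2) lam := by
    intro lam hlam
    have hg : HasDerivAt (fun t : ℝ => (inner ℂ (x : H₁) (T11 x) : ℂ).re - t * ‖(x : H₁)‖ ^ 2 -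
        (inner ℂ u (R t u) : ℂ).re) (-‖(x : H₁)‖ ^ 2 - ‖R lam u‖ ^ 2) lam := by
      have ha : HasDerivAt (fun t : ℝ => (inner ℂ (x : H₁) (T11 x) : ℂ).re - t * ‖(x : H₁)‖ ^ 2)
          (-(1 * ‖(x : H₁)‖ ^ 2)) lam :=
        HasDerivAt.const_sub _ ((hasDerivAt_id lam).mul_const _)
      have := ha.sub (hf lam hlam)
      exact this.congr_deriv (by ring)
    refine hg.congr_of_eventuallyEq ?_
    filter_upwards [Ioi_mem_nhds hlam] with t ht
    exact hσ t ht
  refine ⟨hmain, ?_, ?_⟩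
  · -- strictly decreasing
    apply strictAntiOn_of_deriv_neg (convex_Ioi c₂)
    · intro t ht
      exact ((hmain t ht).differentiableAt.continuousAt).continuousWithinAt
    · intro t ht
      rw [interior_Ioi] at ht
      rw [(hmain t ht).deriv]
      have hx2 : 0 < ‖(x : H₁)‖ ^ 2 := pow_pos (norm_pos_iff.mpr hxne) 2
      nlinarith [sq_nonneg ‖R t u‖]
  · -- tendsto atBot
    have hx2 : 0 < ‖(x : H₁)‖ ^ 2 := pow_pos (norm_pos_iff.mpr hxne) 2
    apply tendsto_atBot_mono' atTop
      (f₁ := fun lam : ℝ => ((inner ℂ (x : H₁) (T11 x) : ℂ).re + ‖u‖ ^ 2) + -(lam * ‖(x : H₁)‖ ^ 2))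
    · filter_upwards [Filter.eventually_ge_atTop (c₂ + 1)] with lam hlam
      have hlam' : c₂ < lam := by linarith
      rw [hσ lam hlam']
      have h1 : ‖R lam u‖ ≤ (lam - c₂)⁻¹ * ‖u‖ := hRle lam hlam' u
      have h2 : (lam - c₂)⁻¹ ≤ 1 := by
        rw [inv_le_one_iff₀]
        right; linarith
      have h3 : -(inner ℂ u (R lam u) : ℂ).re ≤ ‖u‖ ^ 2 := by
        have ha : |(inner ℂ u (R lam u) : ℂ).re| ≤ ‖(inner ℂ u (R lam u) : ℂ)‖ :=
          Complex.abs_re_le_norm _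
        have hb : ‖(inner ℂ u (R lam u) : ℂ)‖ ≤ ‖u‖ * ‖R lam u‖ := norm_inner_le_norm _ _
        have hc : ‖u‖ * ‖R lam u‖ ≤ ‖u‖ * ((lam - c₂)⁻¹ * ‖u‖) := by
          gcongr
        have hd : ‖u‖ * ((lam - c₂)⁻¹ * ‖u‖) ≤ ‖u‖ ^ 2 := by
          nlinarith [norm_nonneg u, mul_nonneg (norm_nonneg u) (norm_nonneg u)]
        have := abs_le.mp ((ha.trans hb).trans (hc.trans hd))
        linarith [this.1]
      linarith
    · apply Filter.tendsto_atBot_add_const_left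
      exact (tendsto_neg_atTop_atBot).comp (tendsto_id.atTop_mul_const hx2)
end

section
/- Fix a real λ > c₂. Assume there are constants b > 0 with ‖T₁₂† x‖ ≥ b‖x‖ for all x ∈ D(T₁₂†), d ≥ 0 with re⟪y, (λ·I − T₂₂)⁻¹ y⟫ ≥ d‖y‖² for all y ∈ H₂, c₁ ∈ ℝ with re⟪x, T₁₁ x⟫ ≥ c₁‖x‖² for all x ∈ D(T₁₂†), and δ ∈ ℝ with δ < d·b² + c₁ − λ. Then for every nonzero x ∈ D(T₁₂†) one has re⟪x, T₁₁ x⟫ − λ‖x‖² + re⟪T₁₂† x, (λ·I − T₂₂)⁻¹(T₁₂† x)⟫ > δ‖x‖². In particular, if δ ≥ 0, the minimal Schur complement S₁(λ) x = T₁₁ x − λ x − T₁₂((T₂₂ − λ·I)⁻¹(T₁₂† x)), defined for x ∈ D(T₁₂†) with (T₂₂ − λ·I)⁻¹(T₁₂† x) ∈ D(T₁₂), is injective. -/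
lemma ring_inverse_neg {R : Type*} [Ring R] (a : R) :
    Ring.inverse (-a) = - Ring.inverse a := by
  by_cases h : IsUnit a
  · obtain ⟨u, rfl⟩ := h
    rw [← Units.val_neg, Ring.inverse_unit, Ring.inverse_unit, inv_neg, Units.val_neg]
  · rw [Ring.inverse_non_unit _ h, Ring.inverse_non_unit, neg_zero]
    intro hu
    exact h (by simpa using hu.neg)

/-- Under the lower bounds `‖T₁₂†x‖ ≥ b‖x‖`, `re⟪y, (λ−T₂₂)⁻¹y⟫ ≥ d‖y‖²`,
`re⟪x, T₁₁x⟫ ≥ c₁‖x‖²` and `δ < d·b² + c₁ − λ`, one has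
`re⟪x, T₁₁x⟫ − λ‖x‖² + re⟪T₁₂†x, (λ−T₂₂)⁻¹(T₁₂†x)⟫ > δ‖x‖²` for all nonzero `x ∈ D(T₁₂†)`;
in particular if `δ ≥ 0` the minimal Schur complement `S₁(λ)` is injective. -/
theorem stmt_8 {H₁ H₂ : Type*}
    [NormedAddCommGroup H₁] [InnerProductSpace ℂ H₁] [CompleteSpace H₁]
    [NormedAddCommGroup H₂] [InnerProductSpace ℂ H₂] [CompleteSpace H₂]
    (T12 : H₂ →ₗ.[ℂ] H₁) (hdense : Dense (T12.domain : Set H₂)) (hclosed : T12.IsClosed)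
    (T22 : H₂ →L[ℂ] H₂) (hT22 : IsSelfAdjoint T22)
    (c₂ : ℝ) (hc2 : ∀ y : H₂, (inner ℂ y (T22 y) : ℂ).re ≤ c₂ * ‖y‖ ^ 2)
    (T11 : T12.adjoint.domain →ₗ[ℂ] H₁)
    (hsymm : ∀ x x' : T12.adjoint.domain,
      (inner ℂ (x : H₁) (T11 x') : ℂ) = inner ℂ (T11 x) (x' : H₁))
    (lam : ℝ) (hlam : c₂ < lam)
    (b : ℝ) (hb : 0 < b) (hbb : ∀ x : T12.adjoint.domain, b * ‖(x : H₁)‖ ≤ ‖T12.adjoint x‖)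
    (d : ℝ) (hd : 0 ≤ d)
    (hdd : ∀ y : H₂, d * ‖y‖ ^ 2 ≤
      (inner ℂ y (Ring.inverse ((lam : ℂ) • (1 : H₂ →L[ℂ] H₂) - T22) y) : ℂ).re)
    (c₁ : ℝ) (hc1 : ∀ x : T12.adjoint.domain,
      c₁ * ‖(x : H₁)‖ ^ 2 ≤ (inner ℂ (x : H₁) (T11 x) : ℂ).re)
    (δ : ℝ) (hδ : δ < d * b ^ 2 + c₁ - lam) :
    (∀ x : T12.adjoint.domain, (x : H₁) ≠ 0 →
      δ * ‖(x : H₁)‖ ^ 2 <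
        (inner ℂ (x : H₁) (T11 x) : ℂ).re - lam * ‖(x : H₁)‖ ^ 2 +
        (inner ℂ (T12.adjoint x)
          (Ring.inverse ((lam : ℂ) • (1 : H₂ →L[ℂ] H₂) - T22) (T12.adjoint x)) : ℂ).re) ∧
    (0 ≤ δ → ∀ (x : T12.adjoint.domain)
      (hm : Ring.inverse (T22 - (lam : ℂ) • (1 : H₂ →L[ℂ] H₂)) (T12.adjoint x) ∈ T12.domain),
      T11 x - (lam : ℂ) • (x : H₁) -
        T12 ⟨Ring.inverse (T22 - (lam : ℂ) • (1 : H₂ →L[ℂ] H₂)) (T12.adjoint x), hm⟩ = 0 →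
      (x : H₁) = 0) := by
  have part1 : ∀ x : T12.adjoint.domain, (x : H₁) ≠ 0 →
      δ * ‖(x : H₁)‖ ^ 2 <
        (inner ℂ (x : H₁) (T11 x) : ℂ).re - lam * ‖(x : H₁)‖ ^ 2 +
        (inner ℂ (T12.adjoint x)
          (Ring.inverse ((lam : ℂ) • (1 : H₂ →L[ℂ] H₂) - T22) (T12.adjoint x)) : ℂ).re := by
    intro x hx
    have h1 := hc1 x
    have h2 := hdd (T12.adjoint x)
    have hbx := hbb x
    have h3 : b ^ 2 * ‖(x : H₁)‖ ^ 2 ≤ ‖T12.adjoint x‖ ^ 2 := by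
      have := pow_le_pow_left₀ (by positivity) hbx 2
      calc b ^ 2 * ‖(x : H₁)‖ ^ 2 = (b * ‖(x : H₁)‖) ^ 2 := by ring
        _ ≤ ‖T12.adjoint x‖ ^ 2 := this
    have hxn : 0 < ‖(x : H₁)‖ := norm_pos_iff.mpr hx
    have hx2 : 0 < ‖(x : H₁)‖ ^ 2 := by positivity
    nlinarith [mul_le_mul_of_nonneg_left h3 hd]
  refine ⟨part1, ?_⟩
  intro hδ0 x hm heq
  by_contra hx
  have key := part1 x hx
  -- identify the two inverses
  have hinv : Ring.inverse (T22 - (lam : ℂ) • (1 : H₂ →L[ℂ] H₂)) =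
      - Ring.inverse ((lam : ℂ) • (1 : H₂ →L[ℂ] H₂) - T22) := by
    rw [← neg_sub ((lam : ℂ) • (1 : H₂ →L[ℂ] H₂)) T22, ring_inverse_neg]
  set R := Ring.inverse ((lam : ℂ) • (1 : H₂ →L[ℂ] H₂) - T22) with hR
  have hT11x : T11 x = (lam : ℂ) • (x : H₁) +
      T12 ⟨Ring.inverse (T22 - (lam : ℂ) • (1 : H₂ →L[ℂ] H₂)) (T12.adjoint x), hm⟩ := by
    have h := heq
    rw [sub_sub, sub_eq_zero] at h
    exact h
  have hformal := LinearPMap.adjoint_isFormalAdjoint hdense (T := T12)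
  have hi : (inner ℂ (x : H₁) (T11 x) : ℂ) =
      (lam : ℂ) * (‖(x : H₁)‖ : ℂ) ^ 2 - inner ℂ (T12.adjoint x) (R (T12.adjoint x)) := by
    rw [hT11x, inner_add_right, inner_smul_right,
      ← hformal x ⟨Ring.inverse (T22 - (lam : ℂ) • (1 : H₂ →L[ℂ] H₂)) (T12.adjoint x), hm⟩]
    simp only [hinv, ContinuousLinearMap.neg_apply, inner_neg_right]
    rw [inner_self_eq_norm_sq_to_K]
    exact (sub_eq_add_neg _ _).symm
  rw [hi] at key
  have hre : ((lam : ℂ) * (‖(x : H₁)‖ : ℂ) ^ 2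
      - inner ℂ (T12.adjoint x) (R (T12.adjoint x)) : ℂ).re
      = lam * ‖(x : H₁)‖ ^ 2 - (inner ℂ (T12.adjoint x) (R (T12.adjoint x)) : ℂ).re := by
    have hcast : ((lam : ℂ) * (‖(x : H₁)‖ : ℂ) ^ 2) = ((lam * ‖(x : H₁)‖ ^ 2 : ℝ) : ℂ) := by
      push_cast; ring
    rw [hcast, Complex.sub_re, Complex.ofReal_re]
  rw [hre] at key
  have hxn : 0 < ‖(x : H₁)‖ := norm_pos_iff.mpr hx
  nlinarith
end

section
/- Let x ∈ D(T₁₂†), x ≠ 0, and suppose λ₀ > c₂ satisfies re⟪x, T₁₁ x⟫ − λ₀‖x‖² − re⟪T₁₂† x, (T₂₂ − λ₀·I)⁻¹(T₁₂† x)⟫ = 0. Assume moreover that y₀ := (T₂₂ − λ₀·I)⁻¹(T₁₂† x) belongs to D(T₁₂) and y₀ ≠ 0. Then λ₊(x, y₀) = λ₀; i.e. the supremum sup{ λ₊(x,y) : y ∈ D(T₁₂), y ≠ 0 } is attained at y₀ and equals λ₀. -/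
private lemma cs_aux {H : Type*} [NormedAddCommGroup H] [InnerProductSpace ℂ H]
    (T : H →L[ℂ] H) (hsym : ∀ v w : H, (inner ℂ (T v) w : ℂ) = inner ℂ v (T w))
    (hpos : ∀ z : H, 0 ≤ (inner ℂ z (T z) : ℂ).re) (a b : H) :
    ‖(inner ℂ a (T b) : ℂ)‖ ^ 2 ≤ (inner ℂ a (T a) : ℂ).re * (inner ℂ b (T b) : ℂ).re := by
  set φ : ℂ := inner ℂ a (T b) with hφ
  have hba : (inner ℂ b (T a) : ℂ) = (starRingEnd ℂ) φ := by
    rw [hφ, ← inner_conj_symm, hsym]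
  have expand : ∀ t : ℝ, 0 ≤ ((inner ℂ b (T b) : ℂ).re * Complex.normSq φ) * (t * t)
      + (2 * Complex.normSq φ) * t + (inner ℂ a (T a) : ℂ).re := by
    intro t
    have h := hpos (a + ((t : ℂ) * (starRingEnd ℂ) φ) • b)
    have hc : (inner ℂ (a + ((t:ℂ) * (starRingEnd ℂ) φ) • b)
        (T (a + ((t:ℂ) * (starRingEnd ℂ) φ) • b)) : ℂ)
        = inner ℂ a (T a) + ((t:ℂ) * (Complex.normSq φ : ℂ))
          + ((t:ℂ) * (Complex.normSq φ : ℂ))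
          + ((t:ℂ) * (t:ℂ) * (Complex.normSq φ : ℂ)) * inner ℂ b (T b) := by
      simp only [map_add, map_smul, inner_add_left, inner_add_right, inner_smul_left,
        inner_smul_right, hba, ← hφ, map_mul, Complex.conj_conj, Complex.conj_ofReal]
      rw [show ((Complex.normSq φ : ℂ)) = φ * (starRingEnd ℂ) φ from (Complex.mul_conj φ).symm]
      ring
    rw [hc] at h
    simpa [Complex.add_re, Complex.mul_re, Complex.ofReal_re, Complex.ofReal_im] using h
      |>.trans_eq (by simp [Complex.add_re, Complex.mul_re]; ring)
  have hd := discrim_le_zero expand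
  rw [discrim] at hd
  rw [Complex.sq_norm]
  rcases eq_or_lt_of_le (Complex.normSq_nonneg φ) with h0 | h0
  · rw [← h0]
    exact mul_nonneg (hpos a) (hpos b)
  · nlinarith [hpos a, hpos b]

private lemma lam_aux_le {A B c lam : ℝ} (hc : 0 ≤ c) (hB : B ≤ lam) (hA : A ≤ lam)
    (hkey : c ≤ (lam - A) * (lam - B)) :
    (A + B + Real.sqrt ((A - B) ^ 2 + 4 * c)) / 2 ≤ lam := by
  have h1 : (A - B) ^ 2 + 4 * c ≤ (2 * lam - A - B) ^ 2 := by nlinarith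
  have h2 : Real.sqrt ((A - B) ^ 2 + 4 * c) ≤ 2 * lam - A - B := by
    have := Real.sqrt_le_sqrt h1
    rwa [Real.sqrt_sq (by linarith)] at this
  linarith

private lemma lam_aux_eq {A B c lam : ℝ} (hB : B ≤ lam) (hA : A ≤ lam)
    (heq : c = (lam - A) * (lam - B)) :
    (A + B + Real.sqrt ((A - B) ^ 2 + 4 * c)) / 2 = lam := by
  have h1 : (A - B) ^ 2 + 4 * c = (2 * lam - A - B) ^ 2 := by nlinarith
  rw [h1, Real.sqrt_sq (by linarith)]
  ring

/-- The functional `λ₊(x,y)`: the larger eigenvalue of the 2×2 matrix `𝒯_{x,y}`. -/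
noncomputable def lambdaPlus {H₁ H₂ : Type*}
    [NormedAddCommGroup H₁] [InnerProductSpace ℂ H₁] [CompleteSpace H₁]
    [NormedAddCommGroup H₂] [InnerProductSpace ℂ H₂] [CompleteSpace H₂]
    (T12 : H₂ →ₗ.[ℂ] H₁) (T11 : T12.adjoint.domain →ₗ[ℂ] H₁) (T22 : H₂ →L[ℂ] H₂)
    (x : T12.adjoint.domain) (y : T12.domain) : ℝ :=
  ((inner ℂ (x : H₁) (T11 x) : ℂ).re / ‖(x : H₁)‖ ^ 2 +
      (inner ℂ (y : H₂) (T22 (y : H₂)) : ℂ).re / ‖(y : H₂)‖ ^ 2 +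
    Real.sqrt (((inner ℂ (x : H₁) (T11 x) : ℂ).re / ‖(x : H₁)‖ ^ 2 -
        (inner ℂ (y : H₂) (T22 (y : H₂)) : ℂ).re / ‖(y : H₂)‖ ^ 2) ^ 2 +
      4 * ‖(inner ℂ (x : H₁) (T12 y) : ℂ)‖ ^ 2 /
        (‖(x : H₁)‖ ^ 2 * ‖(y : H₂)‖ ^ 2))) / 2

/-- If `λ₀ > c₂` is a zero of `σ₁ˣ` and `y₀ := (T₂₂ − λ₀)⁻¹(T₁₂†x)` belongs to
`D(T₁₂)` and is nonzero, then `λ₊(x, y₀) = λ₀`; i.e. the supremum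
`sup{λ₊(x,y) : y ∈ D(T₁₂), y ≠ 0}` is attained at `y₀` and equals `λ₀`. -/
theorem stmt_10 {H₁ H₂ : Type*}
    [NormedAddCommGroup H₁] [InnerProductSpace ℂ H₁] [CompleteSpace H₁]
    [NormedAddCommGroup H₂] [InnerProductSpace ℂ H₂] [CompleteSpace H₂]
    (T12 : H₂ →ₗ.[ℂ] H₁) (hdense : Dense (T12.domain : Set H₂)) (hclosed : T12.IsClosed)
    (T22 : H₂ →L[ℂ] H₂) (hT22 : IsSelfAdjoint T22)
    (c₂ : ℝ) (hc2 : ∀ y : H₂, (inner ℂ y (T22 y) : ℂ).re ≤ c₂ * ‖y‖ ^ 2)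
    (T11 : T12.adjoint.domain →ₗ[ℂ] H₁)
    (hsymm : ∀ x x' : T12.adjoint.domain,
      (inner ℂ (x : H₁) (T11 x') : ℂ) = inner ℂ (T11 x) (x' : H₁))
    (x : T12.adjoint.domain) (hxne : (x : H₁) ≠ 0)
    (lam₀ : ℝ) (hlam₀ : c₂ < lam₀)
    (hzero : (inner ℂ (x : H₁) (T11 x) : ℂ).re - lam₀ * ‖(x : H₁)‖ ^ 2 -
      (inner ℂ (T12.adjoint x)
        (Ring.inverse (T22 - (lam₀ : ℂ) • (1 : H₂ →L[ℂ] H₂)) (T12.adjoint x)) : ℂ).re = 0)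
    (hm : Ring.inverse (T22 - (lam₀ : ℂ) • (1 : H₂ →L[ℂ] H₂)) (T12.adjoint x) ∈ T12.domain)
    (hy₀ne : Ring.inverse (T22 - (lam₀ : ℂ) • (1 : H₂ →L[ℂ] H₂)) (T12.adjoint x) ≠ 0) :
    lambdaPlus T12 T11 T22 x
      ⟨Ring.inverse (T22 - (lam₀ : ℂ) • (1 : H₂ →L[ℂ] H₂)) (T12.adjoint x), hm⟩ = lam₀ ∧
    sSup {r : ℝ | ∃ y : T12.domain, (y : H₂) ≠ 0 ∧ r = lambdaPlus T12 T11 T22 x y} = lam₀ := by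
  set u : H₂ := T12.adjoint x with hu
  set S : H₂ →L[ℂ] H₂ := T22 - (lam₀ : ℂ) • (1 : H₂ →L[ℂ] H₂) with hSdef
  set T : H₂ →L[ℂ] H₂ := (lam₀ : ℂ) • (1 : H₂ →L[ℂ] H₂) - T22 with hTdef
  have hTS : T = -S := by rw [hTdef, hSdef, neg_sub]
  -- self-adjointness of T22 as inner ℂ product identities
  have hadj22 : ContinuousLinearMap.adjoint T22 = T22 :=
    (ContinuousLinearMap.isSelfAdjoint_iff' ).mp hT22
  have h22 : ∀ v w : H₂, (inner ℂ (T22 v) w : ℂ) = inner ℂ v (T22 w) := by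
    intro v w
    conv_lhs => rw [← hadj22]
    exact ContinuousLinearMap.adjoint_inner_left T22 w v
  have hsymT : ∀ v w : H₂, (inner ℂ (T v) w : ℂ) = inner ℂ v (T w) := by
    intro v w
    simp only [hTdef, ContinuousLinearMap.sub_apply, ContinuousLinearMap.smul_apply,
      ContinuousLinearMap.one_apply, inner_sub_left, inner_sub_right, inner_smul_left,
      inner_smul_right, Complex.conj_ofReal, h22]
  -- the quadratic form of T
  have hq : ∀ z : H₂, (inner ℂ z (T z) : ℂ).re = lam₀ * ‖z‖ ^ 2 - (inner ℂ z (T22 z) : ℂ).re := by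
    intro z
    have hz : T z = (lam₀ : ℂ) • z - T22 z := by rw [hTdef]; rfl
    have h1 : (inner ℂ z (T z) : ℂ) = (lam₀ : ℂ) * inner ℂ z z - inner ℂ z (T22 z) := by
      rw [hz, inner_sub_right, inner_smul_right]
    rw [h1, inner_self_eq_norm_sq_to_K, Complex.sub_re]
    simp [Complex.mul_re, ← Complex.ofReal_pow]
  have hposT' : ∀ z : H₂, (lam₀ - c₂) * ‖z‖ ^ 2 ≤ (inner ℂ z (T z) : ℂ).re := by
    intro z
    have := hc2 z
    rw [hq z]
    nlinarith [sq_nonneg ‖z‖]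
  have hposT : ∀ z : H₂, 0 ≤ (inner ℂ z (T z) : ℂ).re := by
    intro z
    have h1 : (0:ℝ) ≤ (lam₀ - c₂) * ‖z‖ ^ 2 := by
      have : (0:ℝ) ≤ lam₀ - c₂ := by linarith
      positivity
    exact h1.trans (hposT' z)
  -- T is a unit
  have hUT : IsUnit T := by
    refine ContinuousLinearMap.isUnit_of_forall_le_norm_inner_map T
      (c := ⟨lam₀ - c₂, by linarith⟩)
      (NNReal.coe_pos.mp (by exact sub_pos.mpr hlam₀)) (fun z => ?_)
    have h1 : ‖z‖ ^ 2 * (lam₀ - c₂) ≤ (inner ℂ z (T z) : ℂ).re := by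
      rw [mul_comm]; exact hposT' z
    have h2 : (inner ℂ z (T z) : ℂ).re ≤ ‖(inner ℂ z (T z) : ℂ)‖ := Complex.re_le_norm _
    have h3 : ‖(inner ℂ z (T z) : ℂ)‖ = ‖(inner ℂ (T z) z : ℂ)‖ := by
      rw [← norm_inner_symm z (T z)]
    calc ‖z‖ ^ 2 * (⟨lam₀ - c₂, by linarith⟩ : NNReal) = ‖z‖ ^ 2 * (lam₀ - c₂) := by norm_num
      _ ≤ ‖(inner ℂ (T z) z : ℂ)‖ := by rw [← h3]; exact h1.trans h2
  have hUS : IsUnit S := by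
    have : S = -T := by rw [hTS, neg_neg]
    rw [this]
    exact hUT.neg
  set R : H₂ →L[ℂ] H₂ := Ring.inverse S with hRdef
  have hSR : ∀ z : H₂, S (R z) = z := by
    intro z
    have h1 : S * R = 1 := Ring.mul_inverse_cancel S hUS
    calc S (R z) = (S * R) z := rfl
      _ = z := by rw [h1]; rfl
  have hsymS : ∀ v w : H₂, (inner ℂ (S v) w : ℂ) = inner ℂ v (S w) := by
    intro v w
    have h1 := hsymT v w
    rw [hTS] at h1
    simpa using h1
  have hsymR : ∀ v w : H₂, (inner ℂ (R v) w : ℂ) = inner ℂ v (R w) := by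
    intro v w
    calc (inner ℂ (R v) w : ℂ) = inner ℂ (R v) (S (R w)) := by rw [hSR]
      _ = inner ℂ (S (R v)) (R w) := (hsymS _ _).symm
      _ = inner ℂ v (R w) := by rw [hSR]
  set y₀ : H₂ := R u with hy₀def
  have hTy₀ : T y₀ = -u := by
    rw [hTS]
    show -(S (R u)) = -u
    rw [hSR]
  -- realness of ⟪u, y₀⟫
  have hreal : (inner ℂ u y₀ : ℂ).im = 0 := by
    have h1 : (starRingEnd ℂ) (inner ℂ u y₀ : ℂ) = inner ℂ u y₀ := by
      rw [inner_conj_symm, hy₀def, hsymR]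
    exact Complex.conj_eq_iff_im.mp h1
  set rx : ℝ := (inner ℂ (x : H₁) (T11 x) : ℂ).re with hrx
  set nx : ℝ := ‖(x : H₁)‖ ^ 2 with hnx
  have hnxpos : 0 < nx := by
    rw [hnx]; exact pow_pos (norm_pos_iff.mpr hxne) 2
  have hzero' : (inner ℂ u y₀ : ℂ).re = rx - lam₀ * nx := by
    linarith [hzero]
  -- quadratic form at y₀
  have hqy₀ : (inner ℂ y₀ (T y₀) : ℂ).re = lam₀ * nx - rx := by
    have h1 : (inner ℂ y₀ (T y₀) : ℂ) = -(inner ℂ u y₀ : ℂ) := by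
      rw [hTy₀, inner_neg_right]
      congr 1
      rw [hy₀def, hsymR]
    rw [h1, Complex.neg_re, hzero']
    ring
  have hAle : rx ≤ lam₀ * nx := by
    have := hposT y₀
    rw [hqy₀] at this
    linarith
  -- adjoint relation
  have hadjrel : ∀ y : T12.domain, (inner ℂ (x : H₁) (T12 y) : ℂ) = inner ℂ u (y : H₂) := by
    intro y
    exact (LinearPMap.adjoint_isFormalAdjoint hdense x y).symm
  -- key Cauchy-Schwarz inequality
  have hkey : ∀ y : H₂, ‖(inner ℂ u y : ℂ)‖ ^ 2 ≤
      (lam₀ * nx - rx) * (lam₀ * ‖y‖ ^ 2 - (inner ℂ y (T22 y) : ℂ).re) := by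
    intro y
    have hcs := cs_aux T hsymT hposT y₀ y
    have h1 : (inner ℂ y₀ (T y) : ℂ) = -(inner ℂ u y : ℂ) := by
      rw [← hsymT y₀ y, hTy₀, inner_neg_left]
    have h2 : ‖(inner ℂ y₀ (T y) : ℂ)‖ = ‖(inner ℂ u y : ℂ)‖ := by
      rw [h1, norm_neg]
    rw [h2, hqy₀, hq y] at hcs
    exact hcs
  -- the value of the inner ℂ product at y₀
  have habs₀ : ‖(inner ℂ u y₀ : ℂ)‖ ^ 2 = (lam₀ * nx - rx) ^ 2 := by
    rw [Complex.sq_norm, Complex.normSq_apply, hzero', hreal]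
    ring
  set ny₀ : ℝ := ‖y₀‖ ^ 2 with hny₀
  have hny₀pos : 0 < ny₀ := by
    rw [hny₀]
    exact pow_pos (norm_pos_iff.mpr hy₀ne) 2
  have hqy₀' : lam₀ * ny₀ - (inner ℂ y₀ (T22 y₀) : ℂ).re = lam₀ * nx - rx := by
    have := hq y₀
    rw [hqy₀] at this
    rw [hny₀]; linarith
  have hBle : ∀ y : H₂, (inner ℂ y (T22 y) : ℂ).re ≤ lam₀ * ‖y‖ ^ 2 := by
    intro y
    have h1 := hc2 y
    nlinarith [sq_nonneg ‖y‖]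
  -- first part
  have hfirst : lambdaPlus T12 T11 T22 x
      ⟨Ring.inverse (T22 - (lam₀ : ℂ) • (1 : H₂ →L[ℂ] H₂)) (T12.adjoint x), hm⟩ = lam₀ := by
    unfold lambdaPlus
    have hco : ((⟨Ring.inverse (T22 - (lam₀ : ℂ) • (1 : H₂ →L[ℂ] H₂)) (T12.adjoint x), hm⟩ :
        T12.domain) : H₂) = y₀ := rfl
    rw [hadjrel, hco]
    rw [show (4 : ℝ) * ‖(inner ℂ u y₀ : ℂ)‖ ^ 2 / (‖(x : H₁)‖ ^ 2 * ‖y₀‖ ^ 2)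
        = 4 * (‖(inner ℂ u y₀ : ℂ)‖ ^ 2 / (‖(x : H₁)‖ ^ 2 * ‖y₀‖ ^ 2)) from
      by ring]
    refine lam_aux_eq ?_ ?_ ?_
    · rw [div_le_iff₀ hny₀pos]
      have := hBle y₀
      rw [← hny₀] at this
      linarith [this]
    · rw [← hrx, ← hnx, div_le_iff₀ hnxpos]
      linarith
    · rw [← hrx, ← hnx, ← hny₀, habs₀]
      field_simp
      rw [hqy₀']
      try ring
  constructor
  · exact hfirst
  -- second part: the supremum
  have hle : ∀ y : T12.domain, (y : H₂) ≠ 0 → lambdaPlus T12 T11 T22 x y ≤ lam₀ := by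
    intro y hyne
    unfold lambdaPlus
    have hnypos : 0 < ‖(y : H₂)‖ ^ 2 := pow_pos (norm_pos_iff.mpr hyne) 2
    rw [hadjrel]
    rw [show (4 : ℝ) * ‖(inner ℂ u (y : H₂) : ℂ)‖ ^ 2 / (‖(x : H₁)‖ ^ 2 * ‖(y : H₂)‖ ^ 2)
        = 4 * (‖(inner ℂ u (y : H₂) : ℂ)‖ ^ 2 / (‖(x : H₁)‖ ^ 2 * ‖(y : H₂)‖ ^ 2)) from
      by ring]
    refine lam_aux_le (by positivity) ?_ ?_ ?_
    · rw [div_le_iff₀ hnypos]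
      linarith [hBle (y : H₂)]
    · rw [← hrx, ← hnx, div_le_iff₀ hnxpos]
      linarith
    · rw [← hrx, ← hnx]
      have hk := hkey (y : H₂)
      rw [div_le_iff₀ (by positivity : (0:ℝ) < nx * ‖(y : H₂)‖ ^ 2)]
      have e1 : (lam₀ - rx / nx) * (lam₀ - (inner ℂ (y:H₂) (T22 (y:H₂)) : ℂ).re / ‖(y:H₂)‖ ^ 2)
          * (nx * ‖(y:H₂)‖ ^ 2)
          = (lam₀ * nx - rx) * (lam₀ * ‖(y:H₂)‖ ^ 2 - (inner ℂ (y:H₂) (T22 (y:H₂)) : ℂ).re) := by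
        field_simp
        try ring
      rw [e1]
      exact hk
  apply le_antisymm
  · apply csSup_le
    · exact ⟨lam₀, ⟨⟨Ring.inverse (T22 - (lam₀ : ℂ) • (1 : H₂ →L[ℂ] H₂)) (T12.adjoint x), hm⟩,
        hy₀ne, hfirst.symm⟩⟩
    · rintro r ⟨y, hyne, rfl⟩
      exact hle y hyne
  · apply le_csSup
    · exact ⟨lam₀, by rintro r ⟨y, hyne, rfl⟩; exact hle y hyne⟩
    · exact ⟨⟨Ring.inverse (T22 - (lam₀ : ℂ) • (1 : H₂ →L[ℂ] H₂)) (T12.adjoint x), hm⟩,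
        hy₀ne, hfirst.symm⟩
end

section
/- Assume there are constants a, ã ≥ 0 such that ‖T₁₁ x‖ ≤ a‖x‖ + ã‖T₁₂† x‖ for all x ∈ D(T₁₂†), and c₂ ∈ ℝ with re⟪y, T₂₂ y⟫ ≤ c₂‖y‖² for all y ∈ H₂. Then for all nonzero x ∈ D(T₁₂†) and nonzero y ∈ D(T₁₂), writing t := ‖T₁₂† x‖/‖x‖, one has λ₊(x,y) ≤ ½( a + c₂ + ã·t + Real.sqrt((ã·t + |a − c₂|)² + 4t²) ). -/
/-- The square-root map `u ↦ √(u² + c)` is `1`-Lipschitz. -/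
lemma sqrt_sq_add_lipschitz (u v c : ℝ) (hc : 0 ≤ c) :
    Real.sqrt (u ^ 2 + c) ≤ Real.sqrt (v ^ 2 + c) + |u - v| := by
  set s := Real.sqrt (v ^ 2 + c) with hs
  have hs0 : 0 ≤ s := Real.sqrt_nonneg _
  have hssq : s ^ 2 = v ^ 2 + c := Real.sq_sqrt (by positivity)
  have hsv : |v| ≤ s := by
    rw [hs, ← Real.sqrt_sq_eq_abs]
    exact Real.sqrt_le_sqrt (by nlinarith)
  have hmul : v * (u - v) ≤ |v| * |u - v| := by
    calc v * (u - v) ≤ |v * (u - v)| := le_abs_self _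
    _ = |v| * |u - v| := abs_mul _ _
  have key : u ^ 2 + c ≤ (s + |u - v|) ^ 2 := by
    nlinarith [abs_nonneg (u - v), sq_abs (u - v)]
  calc Real.sqrt (u ^ 2 + c) ≤ Real.sqrt ((s + |u - v|) ^ 2) := Real.sqrt_le_sqrt key
  _ = s + |u - v| := Real.sqrt_sq (by positivity)

set_option maxHeartbeats 800000 in
/-- If `‖T₁₁x‖ ≤ a‖x‖ + ã‖T₁₂†x‖` and `re⟪y, T₂₂y⟫ ≤ c₂‖y‖²`, then with
`t := ‖T₁₂†x‖/‖x‖` one has `λ₊(x,y) ≤ ½(a + c₂ + ãt + √((ãt + |a − c₂|)² + 4t²))`. -/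
theorem stmt_13 {H₁ H₂ : Type*}
    [NormedAddCommGroup H₁] [InnerProductSpace ℂ H₁] [CompleteSpace H₁]
    [NormedAddCommGroup H₂] [InnerProductSpace ℂ H₂] [CompleteSpace H₂]
    (T12 : H₂ →ₗ.[ℂ] H₁) (hdense : Dense (T12.domain : Set H₂)) (hclosed : T12.IsClosed)
    (T22 : H₂ →L[ℂ] H₂) (hT22 : IsSelfAdjoint T22)
    (T11 : T12.adjoint.domain →ₗ[ℂ] H₁)
    (hsymm : ∀ x x' : T12.adjoint.domain,
      (inner ℂ (x : H₁) (T11 x') : ℂ) = inner ℂ (T11 x) (x' : H₁))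
    (a a' : ℝ) (ha : 0 ≤ a) (ha' : 0 ≤ a')
    (hrelbound : ∀ x : T12.adjoint.domain, ‖T11 x‖ ≤ a * ‖(x : H₁)‖ + a' * ‖T12.adjoint x‖)
    (c₂ : ℝ) (hc2 : ∀ y : H₂, (inner ℂ y (T22 y) : ℂ).re ≤ c₂ * ‖y‖ ^ 2) :
    ∀ (x : T12.adjoint.domain) (y : T12.domain), (x : H₁) ≠ 0 → (y : H₂) ≠ 0 →
      ∀ t : ℝ, t = ‖T12.adjoint x‖ / ‖(x : H₁)‖ →
        lambdaPlus T12 T11 T22 x y ≤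
          (a + c₂ + a' * t + Real.sqrt ((a' * t + |a - c₂|) ^ 2 + 4 * t ^ 2)) / 2 := by
  intro x y hx hy t ht
  have hnx : (0:ℝ) < ‖(x : H₁)‖ := norm_pos_iff.mpr hx
  have hny : (0:ℝ) < ‖(y : H₂)‖ := norm_pos_iff.mpr hy
  set nx := ‖(x : H₁)‖
  set ny := ‖(y : H₂)‖
  set u := ‖T12.adjoint x‖ with hu
  have hu0 : 0 ≤ u := norm_nonneg _
  have ht0 : 0 ≤ t := by rw [ht]; positivity
  have htnx : t * nx = u := by rw [ht]; field_simp
  set A := (inner ℂ (x : H₁) (T11 x) : ℂ).re / nx ^ 2 with hA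
  set B := (inner ℂ (y : H₂) (T22 (y : H₂)) : ℂ).re / ny ^ 2 with hB
  set M := ‖(inner ℂ (x : H₁) (T12 y) : ℂ)‖ with hM
  have hM0 : 0 ≤ M := norm_nonneg _
  -- Bound on A
  have hAbound : A ≤ a + a' * t := by
    have h1 : (inner ℂ (x : H₁) (T11 x) : ℂ).re ≤ nx * ‖T11 x‖ := by
      calc (inner ℂ (x : H₁) (T11 x) : ℂ).re ≤ ‖(inner ℂ (x : H₁) (T11 x) : ℂ)‖ :=
            Complex.re_le_norm _
      _ = ‖(inner ℂ (x : H₁) (T11 x) : ℂ)‖ := rfl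
      _ ≤ nx * ‖T11 x‖ := norm_inner_le_norm _ _
    have h2 : ‖T11 x‖ ≤ a * nx + a' * u := hrelbound x
    rw [hA, div_le_iff₀ (by positivity)]
    have h3 : nx * ‖T11 x‖ ≤ nx * (a * nx + a' * u) :=
      mul_le_mul_of_nonneg_left h2 (le_of_lt hnx)
    have h4 : (a + a' * t) * nx ^ 2 = nx * (a * nx + a' * u) := by rw [← htnx]; ring
    linarith
  -- Bound on B
  have hBbound : B ≤ c₂ := by
    rw [hB, div_le_iff₀ (by positivity)]
    have := hc2 (y : H₂)
    nlinarith
  -- Bound on M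
  have hMbound : M ≤ u * ny := by
    have hadj := T12.adjoint_isFormalAdjoint hdense x y
    have : (inner ℂ (x : H₁) (T12 y) : ℂ) = inner ℂ (T12.adjoint x) (y : H₂) := hadj.symm
    rw [hM, this]
    exact norm_inner_le_norm _ _
  -- the off-diagonal term
  have hoff : 4 * M ^ 2 / (nx ^ 2 * ny ^ 2) ≤ 4 * t ^ 2 := by
    rw [div_le_iff₀ (by positivity)]
    have h1 : M ^ 2 ≤ (u * ny) ^ 2 := by nlinarith
    have : u ^ 2 = t ^ 2 * nx ^ 2 := by nlinarith [htnx]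
    nlinarith
  have hc4 : (0:ℝ) ≤ 4 * t ^ 2 := by positivity
  -- chain of sqrt inequalities
  have step1 : Real.sqrt ((A - B) ^ 2 + 4 * M ^ 2 / (nx ^ 2 * ny ^ 2)) ≤
      Real.sqrt ((A - B) ^ 2 + 4 * t ^ 2) :=
    Real.sqrt_le_sqrt (by linarith)
  have step2 : Real.sqrt ((A - B) ^ 2 + 4 * t ^ 2) ≤
      Real.sqrt ((a + a' * t - c₂) ^ 2 + 4 * t ^ 2) + ((a + a' * t) - A) + (c₂ - B) := by
    have := sqrt_sq_add_lipschitz (A - B) (a + a' * t - c₂) (4 * t ^ 2) hc4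
    have habs : |A - B - (a + a' * t - c₂)| ≤ ((a + a' * t) - A) + (c₂ - B) := by
      rw [abs_le]; constructor <;> linarith
    linarith
  have step3 : Real.sqrt ((a + a' * t - c₂) ^ 2 + 4 * t ^ 2) ≤
      Real.sqrt ((a' * t + |a - c₂|) ^ 2 + 4 * t ^ 2) := by
    apply Real.sqrt_le_sqrt
    have h1 : |a + a' * t - c₂| ≤ a' * t + |a - c₂| := by
      have := abs_sub_abs_le_abs_sub (a + a' * t - c₂) (a' * t)
      calc |a + a' * t - c₂| = |a' * t + (a - c₂)| := by ring_nf
      _ ≤ |a' * t| + |a - c₂| := abs_add_le _ _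
      _ = a' * t + |a - c₂| := by rw [abs_of_nonneg (by positivity)]
    nlinarith [sq_abs (a + a' * t - c₂), abs_nonneg (a + a' * t - c₂),
      abs_nonneg (a - c₂)]
  -- conclude
  show (A + B + Real.sqrt ((A - B) ^ 2 + 4 * M ^ 2 / (nx ^ 2 * ny ^ 2))) / 2 ≤ _
  have : Real.sqrt ((A - B) ^ 2 + 4 * M ^ 2 / (nx ^ 2 * ny ^ 2)) ≤
      Real.sqrt ((a' * t + |a - c₂|) ^ 2 + 4 * t ^ 2) + ((a + a' * t) - A) + (c₂ - B) := by
    linarith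
  linarith
end

section
/- Assume there are constants c₁, c₂⁻ ∈ ℝ with re⟪x, T₁₁ x⟫ ≥ c₁‖x‖² for all x ∈ D(T₁₂†) and re⟪y, T₂₂ y⟫ ≥ c₂⁻‖y‖² for all y ∈ H₂. Then for all nonzero x ∈ D(T₁₂†) and nonzero y ∈ D(T₁₂), one has λ₊(x,y) ≥ ½(c₁ + c₂⁻) + Real.sqrt( ¼(c₁ − c₂⁻)² + |⟪x, T₁₂ y⟫|²/(‖x‖²‖y‖²) ). -/
private lemma sqrt_lip (u v k : ℝ) (hk : 0 ≤ k) :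
    Real.sqrt (u ^ 2 + k) ≤ |u - v| + Real.sqrt (v ^ 2 + k) := by
  have h1 : |v| ≤ Real.sqrt (v ^ 2 + k) := by
    rw [← Real.sqrt_sq_eq_abs]
    exact Real.sqrt_le_sqrt (by linarith)
  have h2 : (0:ℝ) ≤ Real.sqrt (v ^ 2 + k) := Real.sqrt_nonneg _
  have hs : Real.sqrt (v ^ 2 + k) ^ 2 = v ^ 2 + k := Real.sq_sqrt (by positivity)
  have h3 : v * (u - v) ≤ |v| * |u - v| := by
    calc v * (u - v) ≤ |v * (u - v)| := le_abs_self _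
      _ = |v| * |u - v| := abs_mul _ _
  have h4 : |v| * |u - v| ≤ Real.sqrt (v ^ 2 + k) * |u - v| :=
    mul_le_mul_of_nonneg_right h1 (abs_nonneg _)
  have h5 : u ^ 2 + k ≤ (|u - v| + Real.sqrt (v ^ 2 + k)) ^ 2 := by
    nlinarith [sq_abs (u - v)]
  calc Real.sqrt (u ^ 2 + k) ≤ Real.sqrt ((|u - v| + Real.sqrt (v ^ 2 + k)) ^ 2) :=
        Real.sqrt_le_sqrt h5
    _ = |u - v| + Real.sqrt (v ^ 2 + k) := Real.sqrt_sq (by positivity)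

/-- If `re⟪x, T₁₁x⟫ ≥ c₁‖x‖²` and `re⟪y, T₂₂y⟫ ≥ c₂⁻‖y‖²`, then
`λ₊(x,y) ≥ ½(c₁ + c₂⁻) + √(¼(c₁ − c₂⁻)² + |⟪x, T₁₂y⟫|²/(‖x‖²‖y‖²))`. -/
theorem stmt_14 {H₁ H₂ : Type*}
    [NormedAddCommGroup H₁] [InnerProductSpace ℂ H₁] [CompleteSpace H₁]
    [NormedAddCommGroup H₂] [InnerProductSpace ℂ H₂] [CompleteSpace H₂]
    (T12 : H₂ →ₗ.[ℂ] H₁) (hdense : Dense (T12.domain : Set H₂)) (hclosed : T12.IsClosed)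
    (T22 : H₂ →L[ℂ] H₂) (hT22 : IsSelfAdjoint T22)
    (T11 : T12.adjoint.domain →ₗ[ℂ] H₁)
    (hsymm : ∀ x x' : T12.adjoint.domain,
      (inner ℂ (x : H₁) (T11 x') : ℂ) = inner ℂ (T11 x) (x' : H₁))
    (c₁ c₂' : ℝ)
    (hc1 : ∀ x : T12.adjoint.domain,
      c₁ * ‖(x : H₁)‖ ^ 2 ≤ (inner ℂ (x : H₁) (T11 x) : ℂ).re)
    (hc2' : ∀ y : H₂, c₂' * ‖y‖ ^ 2 ≤ (inner ℂ y (T22 y) : ℂ).re) :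
    ∀ (x : T12.adjoint.domain) (y : T12.domain), (x : H₁) ≠ 0 → (y : H₂) ≠ 0 →
      (c₁ + c₂') / 2 + Real.sqrt ((c₁ - c₂') ^ 2 / 4 +
          ‖(inner ℂ (x : H₁) (T12 y) : ℂ)‖ ^ 2 / (‖(x : H₁)‖ ^ 2 * ‖(y : H₂)‖ ^ 2)) ≤
        lambdaPlus T12 T11 T22 x y := by
  intro x y hx hy
  have hx2 : (0:ℝ) < ‖(x : H₁)‖ ^ 2 := pow_pos (norm_pos_iff.mpr hx) 2
  have hy2 : (0:ℝ) < ‖(y : H₂)‖ ^ 2 := pow_pos (norm_pos_iff.mpr hy) 2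
  set A := (inner ℂ (x : H₁) (T11 x) : ℂ).re / ‖(x : H₁)‖ ^ 2 with hA
  set B := (inner ℂ (y : H₂) (T22 (y : H₂)) : ℂ).re / ‖(y : H₂)‖ ^ 2 with hB
  set m := ‖(inner ℂ (x : H₁) (T12 y) : ℂ)‖ ^ 2 / (‖(x : H₁)‖ ^ 2 * ‖(y : H₂)‖ ^ 2)
    with hm
  have hm0 : (0:ℝ) ≤ m := by positivity
  have hAc : c₁ ≤ A := (le_div_iff₀ hx2).mpr (hc1 x)
  have hBc : c₂' ≤ B := (le_div_iff₀ hy2).mpr (hc2' (y : H₂))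
  have hsq : Real.sqrt ((c₁ - c₂') ^ 2 / 4 + m)
      = Real.sqrt ((c₁ - c₂') ^ 2 + 4 * m) / 2 := by
    rw [show (c₁ - c₂') ^ 2 / 4 + m = ((c₁ - c₂') ^ 2 + 4 * m) / 4 by ring,
      Real.sqrt_div (by positivity), show Real.sqrt 4 = 2 by
        rw [show (4:ℝ) = 2 ^ 2 by norm_num, Real.sqrt_sq (by norm_num)]]
  have hlam : lambdaPlus T12 T11 T22 x y
      = (A + B + Real.sqrt ((A - B) ^ 2 + 4 * m)) / 2 := by
    rw [lambdaPlus, hm, hA, hB, mul_div_assoc]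
  have key := sqrt_lip (c₁ - c₂') (A - B) (4 * m) (by linarith)
  have habs : |(c₁ - c₂') - (A - B)| ≤ (A - c₁) + (B - c₂') :=
    abs_le.mpr ⟨by linarith, by linarith⟩
  rw [hsq, hlam]
  linarith
end

section
/- Assume there are constants c₁⁺, c₂ ∈ ℝ with re⟪x, T₁₁ x⟫ ≤ c₁⁺‖x‖² for all x ∈ D(T₁₂†) and re⟪y, T₂₂ y⟫ ≤ c₂‖y‖² for all y ∈ H₂. Then for all nonzero x ∈ D(T₁₂†) and nonzero y ∈ D(T₁₂), one has λ₊(x,y) ≤ ½(c₁⁺ + c₂) + Real.sqrt( ¼(c₁⁺ − c₂)² + ‖T₁₂† x‖²/‖x‖² ). -/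
private lemma key_ineq (a b c a' b' c' : ℝ) (ha : a ≤ a') (hb : b ≤ b') (hcc : c ≤ c')
    (hc0 : 0 ≤ c) :
    (a + b + Real.sqrt ((a - b) ^ 2 + 4 * c)) / 2 ≤
      (a' + b') / 2 + Real.sqrt ((a' - b') ^ 2 / 4 + c') := by
  have hc'0 : 0 ≤ c' := hc0.trans hcc
  set q := Real.sqrt ((a' - b') ^ 2 / 4 + c') with hqdef
  have hq0 : 0 ≤ q := Real.sqrt_nonneg _
  have hq1 : q ^ 2 = (a' - b') ^ 2 / 4 + c' := Real.sq_sqrt (by positivity)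
  have habs : |a' - b'| / 2 ≤ q := by
    have h1 : Real.sqrt ((a' - b') ^ 2 / 4) ≤ q :=
      Real.sqrt_le_sqrt (by linarith)
    calc |a' - b'| / 2 = Real.sqrt ((a' - b') ^ 2 / 4) := by
          rw [show (a' - b') ^ 2 / 4 = ((a' - b') / 2) ^ 2 by ring, Real.sqrt_sq_eq_abs,
            abs_div]
          norm_num
      _ ≤ q := h1
  have h1 : 0 ≤ 2 * q - (a' - b') := by
    have := le_abs_self (a' - b'); linarith
  have h2 : 0 ≤ 2 * q + (a' - b') := by
    have := neg_abs_le (a' - b'); linarith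
  have hR : (a - b) ^ 2 + 4 * c ≤ ((a' - a) + (b' - b) + 2 * q) ^ 2 := by
    nlinarith [mul_nonneg (sub_nonneg.2 ha) (sub_nonneg.2 hb),
      mul_nonneg h1 (sub_nonneg.2 hb), mul_nonneg h2 (sub_nonneg.2 ha)]
  have hs : Real.sqrt ((a - b) ^ 2 + 4 * c) ≤ (a' - a) + (b' - b) + 2 * q := by
    calc Real.sqrt ((a - b) ^ 2 + 4 * c)
        ≤ Real.sqrt (((a' - a) + (b' - b) + 2 * q) ^ 2) := Real.sqrt_le_sqrt hR
      _ = (a' - a) + (b' - b) + 2 * q := Real.sqrt_sq (by linarith)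
  linarith



/-- If `re⟪x, T₁₁x⟫ ≤ c₁⁺‖x‖²` and `re⟪y, T₂₂y⟫ ≤ c₂‖y‖²`, then
`λ₊(x,y) ≤ ½(c₁⁺ + c₂) + √(¼(c₁⁺ − c₂)² + ‖T₁₂†x‖²/‖x‖²)`. -/
theorem stmt_15 {H₁ H₂ : Type*}
    [NormedAddCommGroup H₁] [InnerProductSpace ℂ H₁] [CompleteSpace H₁]
    [NormedAddCommGroup H₂] [InnerProductSpace ℂ H₂] [CompleteSpace H₂]
    (T12 : H₂ →ₗ.[ℂ] H₁) (hdense : Dense (T12.domain : Set H₂)) (hclosed : T12.IsClosed)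
    (T22 : H₂ →L[ℂ] H₂) (hT22 : IsSelfAdjoint T22)
    (T11 : T12.adjoint.domain →ₗ[ℂ] H₁)
    (hsymm : ∀ x x' : T12.adjoint.domain,
      (inner ℂ (x : H₁) (T11 x') : ℂ) = inner ℂ (T11 x) (x' : H₁))
    (c₁' c₂ : ℝ)
    (hc1' : ∀ x : T12.adjoint.domain,
      (inner ℂ (x : H₁) (T11 x) : ℂ).re ≤ c₁' * ‖(x : H₁)‖ ^ 2)
    (hc2 : ∀ y : H₂, (inner ℂ y (T22 y) : ℂ).re ≤ c₂ * ‖y‖ ^ 2) :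
    ∀ (x : T12.adjoint.domain) (y : T12.domain), (x : H₁) ≠ 0 → (y : H₂) ≠ 0 →
      lambdaPlus T12 T11 T22 x y ≤
        (c₁' + c₂) / 2 + Real.sqrt ((c₁' - c₂) ^ 2 / 4 +
          ‖T12.adjoint x‖ ^ 2 / ‖(x : H₁)‖ ^ 2) := by
  intro x y hx hy
  have hnx : (0:ℝ) < ‖(x : H₁)‖ ^ 2 := by
    have : (0:ℝ) < ‖(x : H₁)‖ := norm_pos_iff.mpr hx
    positivity
  have hny : (0:ℝ) < ‖(y : H₂)‖ ^ 2 := by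
    have : (0:ℝ) < ‖(y : H₂)‖ := norm_pos_iff.mpr hy
    positivity
  set A := (inner ℂ (x : H₁) (T11 x) : ℂ).re / ‖(x : H₁)‖ ^ 2 with hA
  set B := (inner ℂ (y : H₂) (T22 (y : H₂)) : ℂ).re / ‖(y : H₂)‖ ^ 2 with hB
  set C := ‖(inner ℂ (x : H₁) (T12 y) : ℂ)‖ ^ 2 /
      (‖(x : H₁)‖ ^ 2 * ‖(y : H₂)‖ ^ 2) with hC
  have hAle : A ≤ c₁' := by
    rw [hA, div_le_iff₀ hnx]; exact hc1' x
  have hBle : B ≤ c₂ := by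
    rw [hB, div_le_iff₀ hny]; exact hc2 (y : H₂)
  -- the adjoint identity and Cauchy–Schwarz
  have hadj : (inner ℂ (T12.adjoint x) (y : H₂) : ℂ) = inner ℂ (x : H₁) (T12 y) :=
    T12.adjoint_isFormalAdjoint hdense x y
  have hCS : ‖(inner ℂ (x : H₁) (T12 y) : ℂ)‖ ≤ ‖T12.adjoint x‖ * ‖(y : H₂)‖ := by
    rw [← hadj]
    exact norm_inner_le_norm _ _
  have hCle : C ≤ ‖T12.adjoint x‖ ^ 2 / ‖(x : H₁)‖ ^ 2 := by
    rw [hC, div_le_div_iff₀ (by positivity) hnx]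
    have h0 : (0:ℝ) ≤ ‖(inner ℂ (x : H₁) (T12 y) : ℂ)‖ := by positivity
    have h1 : ‖(inner ℂ (x : H₁) (T12 y) : ℂ)‖ ^ 2 ≤
        (‖T12.adjoint x‖ * ‖(y : H₂)‖) ^ 2 := pow_le_pow_left₀ h0 hCS 2
    nlinarith [mul_le_mul_of_nonneg_right h1 hnx.le]
  have hC0 : 0 ≤ C := by positivity
  have hrw : 4 * ‖(inner ℂ (x : H₁) (T12 y) : ℂ)‖ ^ 2 /
      (‖(x : H₁)‖ ^ 2 * ‖(y : H₂)‖ ^ 2) = 4 * C := by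
    rw [hC]; ring
  have := key_ineq A B C c₁' c₂ (‖T12.adjoint x‖ ^ 2 / ‖(x : H₁)‖ ^ 2)
    hAle hBle hCle hC0
  unfold lambdaPlus
  rw [← hA, ← hB, hrw]
  exact this
end

section
/- Let D₁ be a bounded self-adjoint operator on H₁ and D₂ a bounded self-adjoint operator on H₂ with ‖D₁‖ ≤ c and ‖D₂‖ ≤ c for some c ≥ 0, and let b > 0 satisfy ‖B g‖ ≥ b‖g‖ for all g ∈ D(B) and ‖B† f‖ ≥ b‖f‖ for all f ∈ D(B†). Suppose λ ∈ ℝ is an eigenvalue of the block operator 𝒜(f,g) = (D₁ f + B g, B† f + D₂ g), i.e. there is a nonzero pair (f,g) with f ∈ D(B†), g ∈ D(B), D₁ f + B g = λ f and B† f + D₂ g = λ g. Then |λ| ≥ b − c. In particular, if b > 2c, then 𝒜 has no eigenvalue in the interval [−c, c]. -/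
/-- If `‖D₁‖, ‖D₂‖ ≤ c` and `‖Bg‖ ≥ b‖g‖`, `‖B†f‖ ≥ b‖f‖`, then every real
eigenvalue `λ` of the block operator `𝒜(f,g) = (D₁f + Bg, B†f + D₂g)` satisfies `|λ| ≥ b − c`;
in particular if `b > 2c` then `𝒜` has no eigenvalue in `[−c, c]`. -/
theorem stmt_17 {H₁ H₂ : Type*}
    [NormedAddCommGroup H₁] [InnerProductSpace ℂ H₁] [CompleteSpace H₁]
    [NormedAddCommGroup H₂] [InnerProductSpace ℂ H₂] [CompleteSpace H₂]
    (B : H₂ →ₗ.[ℂ] H₁) (hdense : Dense (B.domain : Set H₂)) (hclosed : B.IsClosed)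
    (D₁ : H₁ →L[ℂ] H₁) (hD₁ : IsSelfAdjoint D₁)
    (D₂ : H₂ →L[ℂ] H₂) (hD₂ : IsSelfAdjoint D₂)
    (c : ℝ) (hc : 0 ≤ c) (hD₁n : ‖D₁‖ ≤ c) (hD₂n : ‖D₂‖ ≤ c)
    (b : ℝ) (hb : 0 < b)
    (hBg : ∀ g : B.domain, b * ‖(g : H₂)‖ ≤ ‖B g‖)
    (hBf : ∀ f : B.adjoint.domain, b * ‖(f : H₁)‖ ≤ ‖B.adjoint f‖)
    (lam : ℝ) (f : B.adjoint.domain) (g : B.domain)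
    (hne : ¬((f : H₁) = 0 ∧ (g : H₂) = 0))
    (heq1 : D₁ (f : H₁) + B g = (lam : ℂ) • (f : H₁))
    (heq2 : B.adjoint f + D₂ (g : H₂) = (lam : ℂ) • (g : H₂)) :
    b - c ≤ |lam| ∧ (2 * c < b → lam ∉ Set.Icc (-c) c) := by

  have key : b - c ≤ |lam| := by
    have h1 : b * ‖(g : H₂)‖ ≤ (|lam| + c) * ‖(f : H₁)‖ := by
      calc b * ‖(g : H₂)‖ ≤ ‖B g‖ := hBg g
        _ = ‖(lam : ℂ) • (f : H₁) - D₁ (f : H₁)‖ := by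
              rw [eq_sub_of_add_eq' heq1]
        _ ≤ ‖(lam : ℂ) • (f : H₁)‖ + ‖D₁ (f : H₁)‖ := norm_sub_le _ _
        _ ≤ |lam| * ‖(f : H₁)‖ + c * ‖(f : H₁)‖ := by
              have hs : ‖(lam : ℂ) • (f : H₁)‖ = |lam| * ‖(f : H₁)‖ := by
                rw [norm_smul, Complex.norm_real, Real.norm_eq_abs]
              rw [hs]
              gcongr
              exact (D₁.le_opNorm _).trans (mul_le_mul_of_nonneg_right hD₁n (norm_nonneg _))
        _ = (|lam| + c) * ‖(f : H₁)‖ := (add_mul _ _ _).symm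
    have h2 : b * ‖(f : H₁)‖ ≤ (|lam| + c) * ‖(g : H₂)‖ := by
      calc b * ‖(f : H₁)‖ ≤ ‖B.adjoint f‖ := hBf f
        _ = ‖(lam : ℂ) • (g : H₂) - D₂ (g : H₂)‖ := by
              rw [eq_sub_of_add_eq heq2]
        _ ≤ ‖(lam : ℂ) • (g : H₂)‖ + ‖D₂ (g : H₂)‖ := norm_sub_le _ _
        _ ≤ |lam| * ‖(g : H₂)‖ + c * ‖(g : H₂)‖ := by
              have hs : ‖(lam : ℂ) • (g : H₂)‖ = |lam| * ‖(g : H₂)‖ := by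
                rw [norm_smul, Complex.norm_real, Real.norm_eq_abs]
              rw [hs]
              gcongr
              exact (D₂.le_opNorm _).trans (mul_le_mul_of_nonneg_right hD₂n (norm_nonneg _))
        _ = (|lam| + c) * ‖(g : H₂)‖ := (add_mul _ _ _).symm
    have hpos : 0 < ‖(f : H₁)‖ + ‖(g : H₂)‖ := by
      rcases not_and_or.mp hne with h | h
      · have := norm_pos_iff.mpr h
        positivity
      · have := norm_pos_iff.mpr h
        positivity
    have : b * (‖(f : H₁)‖ + ‖(g : H₂)‖) ≤ (|lam| + c) * (‖(f : H₁)‖ + ‖(g : H₂)‖) := by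
      rw [mul_add, mul_add]; linarith
    have hbc : b ≤ |lam| + c := le_of_mul_le_mul_right (by linarith [this]) hpos
    linarith
  refine ⟨key, fun h2c hmem => ?_⟩
  rcases hmem with ⟨hl, hr⟩
  have : |lam| ≤ c := abs_le.mpr ⟨hl, hr⟩
  linarith
end

section
/- Let μ, λ ∈ ℝ with λ > c₂, and suppose (x, y) with x ∈ D(T₁₂†), y ∈ D(T₁₂) is an eigenvector of the block operator with eigenvalue μ, i.e. T₁₁ x + T₁₂ y = μ x and T₁₂† x + T₂₂ y = μ y. Then re⟪x, T₁₁ x⟫ − λ‖x‖² − re⟪T₁₂† x, (T₂₂ − λ·I)⁻¹(T₁₂† x)⟫ = (μ − λ)(‖x‖² + ‖y‖²) − (μ − λ)² · re⟪y, (T₂₂ − λ·I)⁻¹ y⟫. -/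
/-- If `(x,y)` is an eigenvector of the block operator with eigenvalue `μ`,
i.e. `T₁₁x + T₁₂y = μx` and `T₁₂†x + T₂₂y = μy`, then for every `λ > c₂` one has
`re⟪x, T₁₁x⟫ − λ‖x‖² − re⟪T₁₂†x, (T₂₂−λ)⁻¹(T₁₂†x)⟫
  = (μ−λ)(‖x‖² + ‖y‖²) − (μ−λ)²·re⟪y, (T₂₂−λ)⁻¹y⟫`. -/
theorem stmt_18 {H₁ H₂ : Type*}
    [NormedAddCommGroup H₁] [InnerProductSpace ℂ H₁] [CompleteSpace H₁]
    [NormedAddCommGroup H₂] [InnerProductSpace ℂ H₂] [CompleteSpace H₂]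
    (T12 : H₂ →ₗ.[ℂ] H₁) (hdense : Dense (T12.domain : Set H₂)) (hclosed : T12.IsClosed)
    (T22 : H₂ →L[ℂ] H₂) (hT22 : IsSelfAdjoint T22)
    (c₂ : ℝ) (hc2 : ∀ y : H₂, (inner ℂ y (T22 y) : ℂ).re ≤ c₂ * ‖y‖ ^ 2)
    (T11 : T12.adjoint.domain →ₗ[ℂ] H₁)
    (hsymm : ∀ x x' : T12.adjoint.domain,
      (inner ℂ (x : H₁) (T11 x') : ℂ) = inner ℂ (T11 x) (x' : H₁))
    (μ lam : ℝ) (hlam : c₂ < lam)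
    (x : T12.adjoint.domain) (y : T12.domain)
    (heq1 : T11 x + T12 y = (μ : ℂ) • (x : H₁))
    (heq2 : T12.adjoint x + T22 (y : H₂) = (μ : ℂ) • (y : H₂)) :
    (inner ℂ (x : H₁) (T11 x) : ℂ).re - lam * ‖(x : H₁)‖ ^ 2 -
      (inner ℂ (T12.adjoint x)
        (Ring.inverse (T22 - (lam : ℂ) • (1 : H₂ →L[ℂ] H₂)) (T12.adjoint x)) : ℂ).re =
    (μ - lam) * (‖(x : H₁)‖ ^ 2 + ‖(y : H₂)‖ ^ 2) -
      (μ - lam) ^ 2 *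
        (inner ℂ (y : H₂)
          (Ring.inverse (T22 - (lam : ℂ) • (1 : H₂ →L[ℂ] H₂)) (y : H₂)) : ℂ).re := by
  set S : H₂ →L[ℂ] H₂ := T22 - (lam : ℂ) • (1 : H₂ →L[ℂ] H₂) with hSdef
  have hS : IsSelfAdjoint S := by
    refine hT22.sub ?_
    rw [IsSelfAdjoint]
    simp [star_smul, Complex.conj_ofReal]
  have hmul : ∀ (r : ℝ) (z : ℂ), (((r : ℂ)) * z).re = r * z.re := by
    intro r z; simp [Complex.mul_re]
  have hinnerS : ∀ u v : H₂, (inner ℂ (S u) v : ℂ) = inner ℂ u (S v) := by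
    intro u v
    have := ContinuousLinearMap.adjoint_inner_left S v u
    rwa [hS.adjoint_eq] at this
  have hnorm : ∀ b : H₂, (inner ℂ b b : ℂ).re = ‖b‖ ^ 2 := by
    intro b
    rw [inner_self_eq_norm_sq_to_K]
    norm_cast
  have hre : ∀ b : H₂, (inner ℂ b (S b) : ℂ).re = (inner ℂ b (T22 b) : ℂ).re - lam * ‖b‖ ^ 2 := by
    intro b
    have hSb : S b = T22 b - (lam : ℂ) • b := by simp [hSdef]
    have h0 : (inner ℂ b (S b) : ℂ) = inner ℂ b (T22 b) - (lam : ℂ) * inner ℂ b b := by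
      rw [hSb, inner_sub_right, inner_smul_right]
    rw [h0, Complex.sub_re, hmul, hnorm]
  have hlow : ∀ b : H₂, (lam - c₂) * ‖b‖ ≤ ‖S b‖ := by
    intro b
    rcases eq_or_ne b 0 with rfl | hb
    · simp
    have hb' : 0 < ‖b‖ := norm_pos_iff.mpr hb
    have h1 : (lam - c₂) * ‖b‖ ^ 2 ≤ -(inner ℂ b (S b) : ℂ).re := by
      have := hc2 b
      have := hre b
      nlinarith
    have h2 : -(inner ℂ b (S b) : ℂ).re ≤ ‖b‖ * ‖S b‖ := by
      have hn : ‖(inner ℂ b (S b) : ℂ)‖ ≤ ‖b‖ * ‖S b‖ := by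
        exact norm_inner_le_norm (𝕜 := ℂ) b (S b)
      have habs := abs_le.mp (Complex.abs_re_le_norm (inner ℂ b (S b) : ℂ))
      linarith [habs.1]
    have := h1.trans h2
    nlinarith
  have hker : LinearMap.ker (S : H₂ →ₗ[ℂ] H₂) = ⊥ := by
    rw [LinearMap.ker_eq_bot']
    intro b hb
    have := hlow b
    rw [show S b = 0 from hb, norm_zero] at this
    have : ‖b‖ ≤ 0 := by nlinarith
    exact norm_le_zero_iff.mp this
  have hanti : AntilipschitzWith ((lam - c₂)⁻¹).toNNReal S := by
    refine ContinuousLinearMap.antilipschitz_of_bound S fun b => ?_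
    have h1 : (lam - c₂) * ‖b‖ ≤ ‖S b‖ := hlow b
    have h2 : (0:ℝ) < lam - c₂ := by linarith
    rw [Real.coe_toNNReal _ (le_of_lt (inv_pos.mpr h2)), inv_mul_eq_div, le_div_iff₀ h2]
    nlinarith
  have hclosedrange : IsClosed (Set.range S : Set H₂) :=
    hanti.isClosed_range S.uniformContinuous
  haveI : CompleteSpace (LinearMap.range (S : H₂ →ₗ[ℂ] H₂)) := hclosedrange.completeSpace_coe
  have horth : (LinearMap.range (S : H₂ →ₗ[ℂ] H₂))ᗮ = ⊥ := by
    rw [Submodule.eq_bot_iff]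
    intro z hz
    have hz' : ∀ w : H₂, (inner ℂ w (S z) : ℂ) = 0 := by
      intro w
      rw [← hinnerS w z]
      exact hz (S w) (LinearMap.mem_range_self _ w)
    have hSz : S z = 0 := inner_self_eq_zero.mp (hz' (S z))
    have := hlow z
    rw [hSz, norm_zero] at this
    have hz0 : ‖z‖ ≤ 0 := by nlinarith
    exact norm_le_zero_iff.mp hz0
  have hrange : LinearMap.range (S : H₂ →ₗ[ℂ] H₂) = ⊤ := Submodule.orthogonal_eq_bot_iff.mp horth
  have hunit : IsUnit S := by
    rw [ContinuousLinearMap.isUnit_iff_bijective]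
    exact ⟨LinearMap.ker_eq_bot.mp hker, LinearMap.range_eq_top.mp hrange⟩
  set R : H₂ →L[ℂ] H₂ := Ring.inverse S with hRdef
  have hRS : ∀ b : H₂, R (S b) = b := by
    intro b
    have h : R * S = 1 := Ring.inverse_mul_cancel S hunit
    calc R (S b) = (R * S) b := rfl
    _ = b := by rw [h]; rfl
  have hSR : ∀ b : H₂, S (R b) = b := by
    intro b
    have h : S * R = 1 := Ring.mul_inverse_cancel S hunit
    calc S (R b) = (S * R) b := rfl
    _ = b := by rw [h]; rfl
  set a : H₂ := T12.adjoint x with hadef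
  set b : H₂ := (y : H₂) with hbdef
  have hcast : ((μ : ℂ) - (lam : ℂ)) = ((μ - lam : ℝ) : ℂ) := by push_cast; ring
  have ha : a = ((μ : ℂ) - (lam : ℂ)) • b - S b := by
    have h : a = (μ : ℂ) • b - T22 b := by rw [eq_sub_iff_add_eq]; exact heq2
    rw [h, hSdef]
    simp only [ContinuousLinearMap.sub_apply, ContinuousLinearMap.smul_apply,
      ContinuousLinearMap.one_apply, sub_smul]
    abel
  have hRa : R a = ((μ : ℂ) - (lam : ℂ)) • R b - b := by
    rw [ha, map_sub, map_smul, hRS]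
  have hSbRb : (inner ℂ (S b) (R b) : ℂ) = inner ℂ b b := by
    rw [hinnerS, hSR]
  have hinner_a : (inner ℂ a (R a) : ℂ) =
      ((μ : ℂ) - lam) ^ 2 * inner ℂ b (R b) - ((μ : ℂ) - lam) * inner ℂ b b
        - ((μ : ℂ) - lam) * inner ℂ b b + inner ℂ (S b) b := by
    rw [hRa, ha]
    rw [inner_sub_left, inner_sub_right, inner_sub_right, inner_smul_left, inner_smul_left,
      inner_smul_right, inner_smul_right, hSbRb]
    have hc : (starRingEnd ℂ) ((μ : ℂ) - lam) = ((μ : ℂ) - lam) := by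
      simp [Complex.conj_ofReal]
    rw [hc]
    ring
  have hinner_ab : (inner ℂ a b : ℂ) = ((μ : ℂ) - lam) * inner ℂ b b - inner ℂ (S b) b := by
    rw [ha, inner_sub_left, inner_smul_left]
    simp [Complex.conj_ofReal]
  have hT11 : (inner ℂ (x : H₁) (T11 x) : ℂ) =
      ((μ : ℝ) : ℂ) * inner ℂ (x : H₁) (x : H₁) - inner ℂ a b := by
    have h1 : T11 x = (μ : ℂ) • (x : H₁) - T12 y := by rw [eq_sub_iff_add_eq]; exact heq1
    have h2 : (inner ℂ (x : H₁) (T12 y) : ℂ) = inner ℂ a b :=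
      ((T12.adjoint_isFormalAdjoint hdense) x y).symm
    rw [h1, inner_sub_right, inner_smul_right, h2]
  rw [hcast] at hinner_a hinner_ab
  rw [← Complex.ofReal_pow] at hinner_a
  have hre_a := congrArg Complex.re hinner_a
  have hre_ab := congrArg Complex.re hinner_ab
  have hre_T11 := congrArg Complex.re hT11
  have hnormx : (inner ℂ (x : H₁) (x : H₁) : ℂ).re = ‖(x : H₁)‖ ^ 2 := by
    rw [inner_self_eq_norm_sq_to_K]
    norm_cast
  simp only [Complex.sub_re, Complex.add_re, hmul, hnorm, hnormx] at hre_a hre_ab hre_T11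
  rw [hre_T11, hre_ab, hre_a]
  ring
end
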